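/- arXiv:2504.05935 — 3 statements merged into one kernel-verified Lean document; each statement's English description precedes it below -/
import Mathlib

section
/- Let m̂ ∈ P₂(ℝ^d), R > 0, φ ∈ UC_m̂, κ ∈ (0,1], ε ∈ (0,1]. Assume that for every m ∈ G_R^κ there exists an Ekeland point for (φ,κ,ε,m), and that ω_R^ε(M_κ^ε(R)) + εκ√(I(R)) + ε·M_κ^ε(R) < I(R)/2. Then G_R^κ ⊆ O_R(m̂). -/
open MeasureTheory Set Filter Topology
open scoped ENNReal NNReal InnerProductSpace

noncomputable section

/-- `ℝ^d` with the Euclidean structure. -/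
abbrev Ed (d : ℕ) : Type := EuclideanSpace ℝ (Fin d)

/-- A Borel probability measure with finite second moment. -/
def IsP2Meas {E : Type*} [NormedAddCommGroup E] [MeasurableSpace E] (μ : Measure E) : Prop :=
  IsProbabilityMeasure μ ∧ ∫⁻ x, (‖x‖₊ : ℝ≥0∞) ^ 2 ∂μ < ⊤

/-- The Wasserstein space `P₂(ℝ^d)` of Borel probability measures with finite second moment. -/
def P2 (d : ℕ) : Type := {μ : Measure (Ed d) // IsP2Meas μ}

/-- `ς₂(μ)`, the square root of the second moment of `μ`. -/
def varsigma2 {d : ℕ} (μ : P2 d) : ℝ :=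
  Real.sqrt (∫⁻ x, (‖x‖₊ : ℝ≥0∞) ^ 2 ∂μ.1).toReal

/-- `π` is a plan (coupling) between `μ` and `ν`. -/
def IsCoupling {d : ℕ} (π : Measure (Ed d × Ed d)) (μ ν : P2 d) : Prop :=
  π.map Prod.fst = μ.1 ∧ π.map Prod.snd = ν.1

/-- The quadratic transport cost of a plan. -/
def Wcost {d : ℕ} (π : Measure (Ed d × Ed d)) : ℝ≥0∞ :=
  ∫⁻ p, (‖p.1 - p.2‖₊ : ℝ≥0∞) ^ 2 ∂π

/-- The 2-Wasserstein distance. -/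
def W2 {d : ℕ} (μ ν : P2 d) : ℝ :=
  Real.sqrt (⨅ π ∈ {π : Measure (Ed d × Ed d) | IsCoupling π μ ν}, Wcost π).toReal

/-- `π ∈ Π_o(μ,ν)` : an optimal plan between `μ` and `ν`. -/
def IsOptPlan {d : ℕ} (π : Measure (Ed d × Ed d)) (μ ν : P2 d) : Prop :=
  IsCoupling π μ ν ∧ ∀ π' : Measure (Ed d × Ed d), IsCoupling π' μ ν → Wcost π ≤ Wcost π'

/-- The closed Wasserstein ball `B_R(m̂)`. -/
def ballW {d : ℕ} (mhat : P2 d) (R : ℝ) : Set (P2 d) := {μ | W2 mhat μ ≤ R}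

/-- The open Wasserstein ball `O_R(m̂)`. -/
def oballW {d : ℕ} (mhat : P2 d) (R : ℝ) : Set (P2 d) := {μ | W2 mhat μ < R}

/-- The Dirac measure at the origin as an element of `P₂(ℝ^d)`. -/
def dirac0 (d : ℕ) : P2 d :=
  ⟨Measure.dirac 0, ⟨by infer_instance, by rw [lintegral_dirac]; simp⟩⟩

/-- The class `UC_m̂` : nonnegative, uniformly continuous on every bounded set,
positive-definite at `m̂`. -/
structure UCmem {d : ℕ} (mhat : P2 d) (φ : P2 d → ℝ) : Prop where
  nonneg : ∀ μ : P2 d, 0 ≤ φ μ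
  unif_cont : ∀ R > (0 : ℝ), ∀ η > (0 : ℝ), ∃ δ > (0 : ℝ), ∀ μ ν : P2 d,
    W2 mhat μ ≤ R → W2 mhat ν ≤ R → W2 μ ν ≤ δ → |φ μ - φ ν| ≤ η
  zero_at : φ mhat = 0
  pos_off : ∀ μ : P2 d, μ ≠ mhat → 0 < φ μ

/-- The inf-convolution `φ_κ`. -/
def infConv {d : ℕ} (φ : P2 d → ℝ) (κ : ℝ) (m : P2 d) : ℝ :=
  ⨅ μ : P2 d, (φ μ + 1 / (2 * κ ^ 2) * W2 m μ ^ 2)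

/-- `S(R) = sup_{μ ∈ B_R(m̂)} φ(μ)`. -/
def Sfun {d : ℕ} (mhat : P2 d) (φ : P2 d → ℝ) (R : ℝ) : ℝ := sSup (φ '' ballW mhat R)

/-- `I(R) = inf_{μ ∉ O_R(m̂)} φ(μ)`. -/
def Ifun {d : ℕ} (mhat : P2 d) (φ : P2 d → ℝ) (R : ℝ) : ℝ := sInf (φ '' (oballW mhat R)ᶜ)

/-- `G_R = {μ : φ(μ) ≤ I(R)/2}`. -/
def Gset {d : ℕ} (mhat : P2 d) (φ : P2 d → ℝ) (R : ℝ) : Set (P2 d) :=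
  {μ | φ μ ≤ Ifun mhat φ R / 2}

/-- `G_R^κ = {μ : φ_κ(μ) ≤ I(R)/2}`. -/
def GsetK {d : ℕ} (mhat : P2 d) (φ : P2 d → ℝ) (κ R : ℝ) : Set (P2 d) :=
  {μ | infConv φ κ μ ≤ Ifun mhat φ R / 2}

/-- `𝓡(R) = sup{r ≥ 0 : B_r(m̂) ⊆ G_R}`. -/
def Rfun {d : ℕ} (mhat : P2 d) (φ : P2 d → ℝ) (R : ℝ) : ℝ :=
  sSup {r : ℝ | 0 ≤ r ∧ ballW mhat r ⊆ Gset mhat φ R}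

/-- `M_κ^ε(R) = κ√(2S(R)+ε²κ²) − εκ²`. -/
def Mke {d : ℕ} (mhat : P2 d) (φ : P2 d → ℝ) (κ ε R : ℝ) : ℝ :=
  κ * Real.sqrt (2 * Sfun mhat φ R + ε ^ 2 * κ ^ 2) - ε * κ ^ 2

/-- `M^ε(R) = R + √(2S(R)+ε²)`. -/
def Me {d : ℕ} (mhat : P2 d) (φ : P2 d → ℝ) (ε R : ℝ) : ℝ :=
  R + Real.sqrt (2 * Sfun mhat φ R + ε ^ 2)

/-- `ω_R^ε(δ)`, the modulus of continuity of `φ` on `B_{M^ε(R)}(m̂)`. -/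
def omegaR {d : ℕ} (mhat : P2 d) (φ : P2 d → ℝ) (ε R δ : ℝ) : ℝ :=
  sSup {c : ℝ | ∃ ν₁ ν₂ : P2 d, W2 ν₁ ν₂ ≤ δ ∧ W2 mhat ν₁ ≤ Me mhat φ ε R ∧
    W2 mhat ν₂ ≤ Me mhat φ ε R ∧ c = |φ ν₁ - φ ν₂|}

/-- `K_κ^ε(R) = εκ² + κ√(ε²κ² + 2ω_R^ε(M_κ^ε(R)))`. -/
def Kke {d : ℕ} (mhat : P2 d) (φ : P2 d → ℝ) (κ ε R : ℝ) : ℝ :=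
  ε * κ ^ 2 + κ * Real.sqrt (ε ^ 2 * κ ^ 2 + 2 * omegaR mhat φ ε R (Mke mhat φ κ ε R))

/-- `N_κ^ε(R,m) = εκ√(2φ_κ(m)) + ε·M_κ^ε(R)`. -/
def Nke {d : ℕ} (mhat : P2 d) (φ : P2 d → ℝ) (κ ε R : ℝ) (m : P2 d) : ℝ :=
  ε * κ * Real.sqrt (2 * infConv φ κ m) + ε * Mke mhat φ κ ε R

/-- `μ̄` is an Ekeland point for `(φ,κ,ε,m)`. -/
def EkelandPt {d : ℕ} (φ : P2 d → ℝ) (κ ε : ℝ) (m μb : P2 d) : Prop :=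
  (φ μb + 1 / (2 * κ ^ 2) * W2 m μb ^ 2 ≤ φ m - ε * W2 μb m) ∧
  ∀ μ : P2 d, φ μb + 1 / (2 * κ ^ 2) * W2 m μb ^ 2 ≤
    φ μ + 1 / (2 * κ ^ 2) * W2 m μ ^ 2 + ε * W2 μb μ

/-- The proximal subgradient inequality at `m` with target `μ`, slope measure `α`
and parameter `σ`. -/
def ProxIneq {d : ℕ} (φ : P2 d → ℝ) (ε σ : ℝ) (m : P2 d)
    (α : Measure (Ed d × Ed d)) (μ : P2 d) : Prop :=
  ∀ β : Measure (Ed d × Ed d × Ed d), IsP2Meas β →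
    IsCoupling (β.map fun z => (z.1, z.2.1)) m μ →
    β.map (fun z => (z.1, z.2.2)) = α →
    φ m + ∫ z, ⟪z.2.2, z.2.1 - z.1⟫_ℝ ∂β - σ * ∫ z, ‖z.2.1 - z.1‖ ^ 2 ∂β
      - ε * W2 m μ ≤ φ μ

/-- `α ∈ ∂_P^ε φ(m)` : proximal `ε`-subgradient. -/
def ProxSubgrad {d : ℕ} (φ : P2 d → ℝ) (ε : ℝ) (m : P2 d)
    (α : Measure (Ed d × Ed d)) : Prop :=
  IsP2Meas α ∧ ∃ σ > (0 : ℝ), ∃ r > (0 : ℝ), ∀ μ : P2 d, W2 m μ ≤ r → ProxIneq φ ε σ m α μ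

/-- `(φ,ψ)` is a control-Lyapunov pair at `m̂` for the dynamics `f`, with threshold `ε₀`. -/
structure IsCLP {d : ℕ} {U : Type*} (f : Ed d → P2 d → U → Ed d) (mhat : P2 d)
    (φ : P2 d → ℝ) (ψ : P2 d → ℝ → ℝ) (ε₀ : ℝ) : Prop where
  phi_uc : UCmem mhat φ
  psi_pos : ∀ (m : P2 d) (ε : ℝ), 0 < ε → 0 < ψ m ε
  psi_cont : ∀ (m : P2 d) (ε : ℝ), 0 < ε → ∀ η > (0 : ℝ), ∃ δ > (0 : ℝ),
    ∀ (m' : P2 d) (ε' : ℝ), 0 < ε' → W2 m m' < δ → |ε - ε'| < δ → |ψ m ε - ψ m' ε'| < η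
  level_bdd : ∀ c : ℝ, ∃ K : ℝ, ∀ μ : P2 d, φ μ ≤ c → W2 mhat μ ≤ K
  psi_inf_pos : ∀ r R : ℝ, 0 < r → r < R → ∀ ε > (0 : ℝ), ∃ g > (0 : ℝ),
    ∀ m : P2 d, W2 mhat m ≤ R → ¬ W2 mhat m < r → g ≤ ψ m ε
  psi_mono : ∀ (m : P2 d) (ε ε' : ℝ), 0 < ε → ε ≤ ε' → ψ m ε ≤ ψ m ε'
  eps0_pos : 0 < ε₀
  decrease : ∀ ε : ℝ, 0 < ε → ε < ε₀ → ∀ (m : P2 d) (α : Measure (Ed d × Ed d)),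
    ProxSubgrad φ ε m α → ∃ u : U, ∫ z, ⟪z.2, f z.1 m u⟫_ℝ ∂α ≤ -ψ m ε

/-- A partition of `[0,∞)`. -/
def IsPartition (θ : ℕ → ℝ) : Prop :=
  θ 0 = 0 ∧ StrictMono θ ∧ Tendsto θ atTop atTop

/-- The steps of the partition `θ` lie in `[δ₁, δ₂]` (i.e. `θ ∈ Θ(δ₁,δ₂)`). -/
def StepIn (θ : ℕ → ℝ) (δ₁ δ₂ : ℝ) : Prop :=
  ∀ i : ℕ, δ₁ ≤ θ (i + 1) - θ i ∧ θ (i + 1) - θ i ≤ δ₂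

/-- `W₂`-continuity of a measure-valued curve on `[a,b]`. -/
def W2ContinuousOn {d : ℕ} (m : ℝ → P2 d) (a b : ℝ) : Prop :=
  ∀ t ∈ Icc a b, ∀ η > (0 : ℝ), ∃ δ > (0 : ℝ), ∀ s ∈ Icc a b, |s - t| < δ →
    W2 (m s) (m t) < η

/-- `m` is a `W₂`-continuous distributional solution of the non-local continuity equation
`∂_t m_t + div(f(x,m_t,u) m_t) = 0` on `[a,b]` with constant control `u`. -/
def SolvesCE {d : ℕ} {U : Type*} (f : Ed d → P2 d → U → Ed d) (u : U)
    (m : ℝ → P2 d) (a b : ℝ) : Prop :=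
  W2ContinuousOn m a b ∧
  ∀ χ : Ed d × ℝ → ℝ, ContDiff ℝ (⊤ : ℕ∞) χ → HasCompactSupport χ →
    tsupport χ ⊆ univ ×ˢ Ioo a b →
    ∫ t in a..b, ∫ x, (deriv (fun s : ℝ => χ (x, s)) t +
      fderiv ℝ (fun y : Ed d => χ (y, t)) x (f x (m t) u)) ∂(m t).1 = 0

/-- A `θ`-trajectory of the controlled continuity equation under the feedback `k`,
starting from `m_*`. -/
def IsTraj {d : ℕ} {U : Type*} (f : Ed d → P2 d → U → Ed d) (k : P2 d → U)
    (θ : ℕ → ℝ) (mstar : P2 d) (m : ℝ → P2 d) : Prop :=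
  m 0 = mstar ∧ ∀ i : ℕ, SolvesCE f (k (m (θ i))) m (θ i) (θ (i + 1))

/-- The extremal-shift value `∫ ((x−y)/κ²)·f(x,m,u) dπ(x,y)`. -/
def shiftVal {d : ℕ} {U : Type*} (f : Ed d → P2 d → U → Ed d) (κ : ℝ)
    (π : Measure (Ed d × Ed d)) (m : P2 d) (u : U) : ℝ :=
  ∫ p, ⟪(κ ^ 2)⁻¹ • (p.1 - p.2), f p.1 m u⟫_ℝ ∂π

/-- `k` is an extremal-shift feedback associated with the plan selection `πsel`. -/
def IsExtremalShift {d : ℕ} {U : Type*} (f : Ed d → P2 d → U → Ed d) (κ : ℝ)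
    (πsel : P2 d → Measure (Ed d × Ed d)) (k : P2 d → U) : Prop :=
  ∀ (m : P2 d) (u : U), shiftVal f κ (πsel m) m (k m) ≤ shiftVal f κ (πsel m) m u

/-- `C₂(R)` (computed with time-step bound `δ` and `s = ς₂(m̂)`). -/
def C2const (C₁ δ s R : ℝ) : ℝ :=
  C₁ * Real.exp (C₁ * δ) * (1 + 2 * (C₁ * δ + s + R) * Real.exp (2 * C₁ * δ))

/-- `C₃(R)` (computed with time-step bound `δ` and `s = ς₂(m̂)`). -/
def C3const (C₀ C₁ δ s R : ℝ) : ℝ :=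
  C₀ * (C₁ * Real.exp (C₁ * δ) * (1 + 2 * (C₁ * δ + s + R) * Real.exp (2 * C₁ * δ))
    + C2const C₁ δ s R)

/-- A feedback `k` is s-stabilizing at `m̂`. -/
def SStabilizing {d : ℕ} {U : Type*} (f : Ed d → P2 d → U → Ed d) (mhat : P2 d)
    (k : P2 d → U) : Prop :=
  ∃ M : ℝ → ℝ, (∀ R > (0 : ℝ), 0 < M R) ∧
    Tendsto M (nhdsWithin 0 (Ioi 0)) (nhds 0) ∧
    ∀ r R : ℝ, 0 < r → r < R → ∃ δ > (0 : ℝ), ∃ T > (0 : ℝ),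
      ∀ δhat : ℝ, 0 < δhat → δhat < δ →
      ∀ θ : ℕ → ℝ, IsPartition θ → StepIn θ δhat δ →
      ∀ mstar : P2 d, W2 mhat mstar ≤ R →
      ∀ m : ℝ → P2 d, IsTraj f k θ mstar m →
        (∀ t : ℝ, T ≤ t → W2 mhat (m t) ≤ r) ∧ (∀ t : ℝ, 0 ≤ t → W2 mhat (m t) ≤ M R)
namespace W2Aux

variable {d : ℕ}

def M2 (μ : P2 d) : ℝ≥0∞ := ∫⁻ x, (‖x‖₊ : ℝ≥0∞) ^ 2 ∂μ.1

def Winf (μ ν : P2 d) : ℝ≥0∞ :=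
  ⨅ π ∈ {π : Measure (Ed d × Ed d) | IsCoupling π μ ν}, Wcost π

lemma W2_eq (μ ν : P2 d) : W2 μ ν = Real.sqrt (Winf μ ν).toReal := rfl

lemma M2_lt_top (μ : P2 d) : M2 μ < ⊤ := μ.2.2

lemma mnorm2_meas : Measurable (fun x : Ed d => (‖x‖₊ : ℝ≥0∞) ^ 2) := by
  measurability

lemma coupling_prob {π : Measure (Ed d × Ed d)} {μ ν : P2 d} (h : IsCoupling π μ ν) :
    IsProbabilityMeasure π := by
  haveI : IsProbabilityMeasure μ.1 := μ.2.1
  constructor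
  have : π.map Prod.fst Set.univ = 1 := by rw [h.1]; exact measure_univ
  rwa [Measure.map_apply measurable_fst MeasurableSet.univ, Set.preimage_univ] at this

lemma sq_bound (x y : Ed d) :
    (‖x - y‖₊ : ℝ≥0∞) ^ 2 ≤ 2 * (‖x‖₊ : ℝ≥0∞) ^ 2 + 2 * (‖y‖₊ : ℝ≥0∞) ^ 2 := by
  have h1 : ‖x - y‖₊ ≤ ‖x‖₊ + ‖y‖₊ := nnnorm_sub_le x y
  have h2 : (‖x - y‖₊ : ℝ≥0∞) ^ 2 ≤ ((‖x‖₊ + ‖y‖₊ : ℝ≥0) : ℝ≥0∞) ^ 2 := by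
    gcongr <;> exact_mod_cast h1
  refine h2.trans ?_
  have h3 : ((‖x‖₊ + ‖y‖₊ : ℝ≥0) : ℝ≥0∞) ^ 2
      ≤ ((2 * ‖x‖₊ ^ 2 + 2 * ‖y‖₊ ^ 2 : ℝ≥0) : ℝ≥0∞) := by
    rw [show ((‖x‖₊ + ‖y‖₊ : ℝ≥0) : ℝ≥0∞) ^ 2 = (((‖x‖₊ + ‖y‖₊) ^ 2 : ℝ≥0) : ℝ≥0∞) by push_cast; ring]
    apply ENNReal.coe_le_coe.2
    have : ((((‖x‖₊ + ‖y‖₊) ^ 2 : ℝ≥0)) : ℝ) ≤ ((2 * ‖x‖₊ ^ 2 + 2 * ‖y‖₊ ^ 2 : ℝ≥0) : ℝ) := by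
      push_cast
      nlinarith [norm_nonneg x, norm_nonneg y, sq_nonneg (‖x‖ - ‖y‖)]
    exact_mod_cast this
  refine h3.trans (le_of_eq ?_)
  push_cast
  try ring

lemma lintegral_fst {π : Measure (Ed d × Ed d)} {μ ν : P2 d} (h : IsCoupling π μ ν) :
    ∫⁻ p, (‖p.1‖₊ : ℝ≥0∞) ^ 2 ∂π = M2 μ := by
  rw [M2, ← h.1, lintegral_map mnorm2_meas measurable_fst]

lemma lintegral_snd {π : Measure (Ed d × Ed d)} {μ ν : P2 d} (h : IsCoupling π μ ν) :
    ∫⁻ p, (‖p.2‖₊ : ℝ≥0∞) ^ 2 ∂π = M2 ν := by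
  rw [M2, ← h.2, lintegral_map mnorm2_meas measurable_snd]

lemma wcost_le {π : Measure (Ed d × Ed d)} {μ ν : P2 d} (h : IsCoupling π μ ν) :
    Wcost π ≤ 2 * M2 μ + 2 * M2 ν := by
  calc Wcost π ≤ ∫⁻ p, (2 * (‖p.1‖₊ : ℝ≥0∞) ^ 2 + 2 * (‖p.2‖₊ : ℝ≥0∞) ^ 2) ∂π := by
        exact lintegral_mono fun p => sq_bound p.1 p.2
    _ = 2 * M2 μ + 2 * M2 ν := by
        have e1 : ∫⁻ (a : Ed d × Ed d), 2 * (‖a.1‖₊ : ℝ≥0∞) ^ 2 ∂π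
            = 2 * ∫⁻ (a : Ed d × Ed d), (‖a.1‖₊ : ℝ≥0∞) ^ 2 ∂π :=
          lintegral_const_mul 2 (mnorm2_meas.comp measurable_fst)
        have e2 : ∫⁻ (a : Ed d × Ed d), 2 * (‖a.2‖₊ : ℝ≥0∞) ^ 2 ∂π
            = 2 * ∫⁻ (a : Ed d × Ed d), (‖a.2‖₊ : ℝ≥0∞) ^ 2 ∂π :=
          lintegral_const_mul 2 (mnorm2_meas.comp measurable_snd)
        rw [lintegral_add_left (by exact (mnorm2_meas.comp measurable_fst).const_mul 2),
          e1, e2, lintegral_fst h, lintegral_snd h]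

lemma wcost_lt_top {π : Measure (Ed d × Ed d)} {μ ν : P2 d} (h : IsCoupling π μ ν) :
    Wcost π < ⊤ :=
  lt_of_le_of_lt (wcost_le h) (by
    have := μ.2.2; have := ν.2.2
    refine ENNReal.add_lt_top.2 ⟨?_, ?_⟩ <;>
      exact ENNReal.mul_lt_top (by norm_num) (by assumption))

end W2Aux

namespace B2
variable {d : ℕ}
open W2Aux

lemma cost_meas : Measurable (fun p : Ed d × Ed d => (‖p.1 - p.2‖₊ : ℝ≥0∞) ^ 2) :=
  mnorm2_meas.comp (measurable_fst.sub measurable_snd)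

lemma cost_meas' : Measurable (fun q : Ed d × Ed d => (‖q.2 - q.1‖₊ : ℝ≥0∞) ^ 2) :=
  mnorm2_meas.comp (measurable_snd.sub measurable_fst)

lemma isCoupling_prod (μ ν : P2 d) : IsCoupling (μ.1.prod ν.1) μ ν := by
  haveI : IsProbabilityMeasure μ.1 := μ.2.1
  haveI : IsProbabilityMeasure ν.1 := ν.2.1
  constructor
  · rw [Measure.map_fst_prod]; simp
  · rw [Measure.map_snd_prod]; simp

lemma winf_le {π : Measure (Ed d × Ed d)} {μ ν : P2 d} (h : IsCoupling π μ ν) :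
    Winf μ ν ≤ Wcost π := biInf_le _ h

lemma winf_lt_top (μ ν : P2 d) : Winf μ ν < ⊤ :=
  lt_of_le_of_lt (winf_le (isCoupling_prod μ ν)) (wcost_lt_top (isCoupling_prod μ ν))

lemma exists_coupling_le (μ ν : P2 d) {η : ℝ≥0∞} (hη : η ≠ 0) :
    ∃ π, IsCoupling π μ ν ∧ Wcost π ≤ Winf μ ν + η := by
  have h : Winf μ ν < Winf μ ν + η := ENNReal.lt_add_right (winf_lt_top μ ν).ne hη
  rw [Winf] at h
  simp only [iInf_lt_iff] at h
  obtain ⟨π, hπ, hc⟩ := h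
  exact ⟨π, hπ, hc.le⟩

lemma sq_W2 (μ ν : P2 d) : W2 μ ν ^ 2 = (Winf μ ν).toReal := by
  rw [W2_eq]; exact Real.sq_sqrt ENNReal.toReal_nonneg

lemma W2_nonneg (μ ν : P2 d) : 0 ≤ W2 μ ν := Real.sqrt_nonneg _

lemma W2_le_of_coupling {π : Measure (Ed d × Ed d)} {μ ν : P2 d} (h : IsCoupling π μ ν) :
    W2 μ ν ≤ Real.sqrt (Wcost π).toReal := by
  rw [W2_eq]
  exact Real.sqrt_le_sqrt (ENNReal.toReal_mono (wcost_lt_top h).ne (winf_le h))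

lemma W2_self (μ : P2 d) : W2 μ μ = 0 := by
  have hdiag : Measurable (fun x : Ed d => (x, x)) := measurable_id.prodMk measurable_id
  have hc : IsCoupling (μ.1.map (fun x => (x, x))) μ μ := by
    constructor
    · rw [Measure.map_map measurable_fst hdiag]; exact Measure.map_id
    · rw [Measure.map_map measurable_snd hdiag]; exact Measure.map_id
  have hcost : Wcost (μ.1.map (fun x => (x, x))) = 0 := by
    rw [Wcost, lintegral_map cost_meas hdiag]; simp
  have := (winf_le hc).trans hcost.le
  rw [W2_eq, le_zero_iff.1 this]
  simp

lemma wcost_map_swap (π : Measure (Ed d × Ed d)) :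
    Wcost (π.map Prod.swap) = Wcost π := by
  rw [Wcost, lintegral_map cost_meas measurable_swap]
  simp only [Wcost, Prod.fst_swap, Prod.snd_swap]
  congr 1
  ext p
  rw [show ‖p.2 - p.1‖₊ = ‖p.1 - p.2‖₊ from by rw [← norm_toNNReal, ← norm_toNNReal, norm_sub_rev]]

lemma isCoupling_swap {π : Measure (Ed d × Ed d)} {μ ν : P2 d} (h : IsCoupling π ν μ) :
    IsCoupling (π.map Prod.swap) μ ν := by
  constructor
  · rw [Measure.map_map measurable_fst measurable_swap]; exact h.2
  · rw [Measure.map_map measurable_snd measurable_swap]; exact h.1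

lemma winf_symm_le (μ ν : P2 d) : Winf μ ν ≤ Winf ν μ := by
  refine le_iInf₂ fun π hπ => ?_
  exact (winf_le (isCoupling_swap hπ)).trans (wcost_map_swap π).le

lemma W2_symm (μ ν : P2 d) : W2 μ ν = W2 ν μ := by
  rw [W2_eq, W2_eq, le_antisymm (winf_symm_le μ ν) (winf_symm_le ν μ)]

end B2

namespace B3
open W2Aux B2
variable {d : ℕ}

def interpMap (d : ℕ) (t : ℝ) : Ed d × Ed d → Ed d := fun p => (1 - t) • p.1 + t • p.2

lemma interpMap_meas (t : ℝ) : Measurable (interpMap d t) :=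
  by unfold interpMap; fun_prop

lemma sq_bound_add (x y : Ed d) :
    (‖x + y‖₊ : ℝ≥0∞) ^ 2 ≤ 2 * (‖x‖₊ : ℝ≥0∞) ^ 2 + 2 * (‖y‖₊ : ℝ≥0∞) ^ 2 := by
  have := sq_bound x (-y)
  simpa [sub_neg_eq_add] using this

lemma lintegral_cmul_fst {π : Measure (Ed d × Ed d)} (c : ℝ≥0∞) :
    ∫⁻ (a : Ed d × Ed d), c * (‖a.1‖₊ : ℝ≥0∞) ^ 2 ∂π
      = c * ∫⁻ (a : Ed d × Ed d), (‖a.1‖₊ : ℝ≥0∞) ^ 2 ∂π :=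
  lintegral_const_mul c (mnorm2_meas.comp measurable_fst)

lemma lintegral_cmul_snd {π : Measure (Ed d × Ed d)} (c : ℝ≥0∞) :
    ∫⁻ (a : Ed d × Ed d), c * (‖a.2‖₊ : ℝ≥0∞) ^ 2 ∂π
      = c * ∫⁻ (a : Ed d × Ed d), (‖a.2‖₊ : ℝ≥0∞) ^ 2 ∂π :=
  lintegral_const_mul c (mnorm2_meas.comp measurable_snd)

lemma lintegral_cmul_sub {π : Measure (Ed d × Ed d)} (c : ℝ≥0∞) :
    ∫⁻ (a : Ed d × Ed d), c * (‖a.1 - a.2‖₊ : ℝ≥0∞) ^ 2 ∂π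
      = c * ∫⁻ (a : Ed d × Ed d), (‖a.1 - a.2‖₊ : ℝ≥0∞) ^ 2 ∂π :=
  lintegral_const_mul c cost_meas

lemma isP2Meas_interp {π : Measure (Ed d × Ed d)} {μ ν : P2 d} (h : IsCoupling π μ ν)
    (t : ℝ) : IsP2Meas (π.map (interpMap d t)) := by
  haveI := coupling_prob h
  refine ⟨Measure.isProbabilityMeasure_map (interpMap_meas t).aemeasurable, ?_⟩
  rw [lintegral_map mnorm2_meas (interpMap_meas t)]
  have hb : ∀ p : Ed d × Ed d, (‖interpMap d t p‖₊ : ℝ≥0∞) ^ 2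
      ≤ (2 * (‖(1 - t : ℝ)‖₊ : ℝ≥0∞) ^ 2) * (‖p.1‖₊ : ℝ≥0∞) ^ 2
        + (2 * (‖(t : ℝ)‖₊ : ℝ≥0∞) ^ 2) * (‖p.2‖₊ : ℝ≥0∞) ^ 2 := by
    intro p
    refine (sq_bound_add _ _).trans ?_
    have e1 : (‖(1 - t) • p.1‖₊ : ℝ≥0∞) ^ 2 = (‖(1 - t : ℝ)‖₊ : ℝ≥0∞) ^ 2 * (‖p.1‖₊ : ℝ≥0∞) ^ 2 := by
      rw [nnnorm_smul]; push_cast; ring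
    have e2 : (‖t • p.2‖₊ : ℝ≥0∞) ^ 2 = (‖(t : ℝ)‖₊ : ℝ≥0∞) ^ 2 * (‖p.2‖₊ : ℝ≥0∞) ^ 2 := by
      rw [nnnorm_smul]; push_cast; ring
    rw [e1, e2]
    ring_nf
    exact le_refl _
  calc ∫⁻ p, (‖interpMap d t p‖₊ : ℝ≥0∞) ^ 2 ∂π
      ≤ ∫⁻ p, ((2 * (‖(1 - t : ℝ)‖₊ : ℝ≥0∞) ^ 2) * (‖p.1‖₊ : ℝ≥0∞) ^ 2
        + (2 * (‖(t : ℝ)‖₊ : ℝ≥0∞) ^ 2) * (‖p.2‖₊ : ℝ≥0∞) ^ 2) ∂π := lintegral_mono hb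
    _ < ⊤ := by
        rw [lintegral_add_left (by exact (mnorm2_meas.comp measurable_fst).const_mul _),
          lintegral_cmul_fst, lintegral_cmul_snd, lintegral_fst h, lintegral_snd h]
        have h1 := μ.2.2
        have h2 := ν.2.2
        refine ENNReal.add_lt_top.2 ⟨?_, ?_⟩ <;>
          exact ENNReal.mul_lt_top
            (ENNReal.mul_lt_top (by norm_num) ENNReal.coe_lt_top) (by assumption)

def itp {π : Measure (Ed d × Ed d)} {μ ν : P2 d} (h : IsCoupling π μ ν) (t : ℝ) : P2 d :=
  ⟨π.map (interpMap d t), isP2Meas_interp h t⟩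

lemma itp_zero {π : Measure (Ed d × Ed d)} {μ ν : P2 d} (h : IsCoupling π μ ν) :
    itp h 0 = μ := by
  refine Subtype.ext ?_
  show π.map (interpMap d 0) = μ.1
  rw [show interpMap d 0 = Prod.fst from funext fun p => by simp [interpMap]]
  exact h.1

lemma itp_one {π : Measure (Ed d × Ed d)} {μ ν : P2 d} (h : IsCoupling π μ ν) :
    itp h 1 = ν := by
  refine Subtype.ext ?_
  show π.map (interpMap d 1) = ν.1
  rw [show interpMap d 1 = Prod.snd from funext fun p => by simp [interpMap]]
  exact h.2

lemma isCoupling_itp {π : Measure (Ed d × Ed d)} {μ ν : P2 d} (h : IsCoupling π μ ν)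
    (s t : ℝ) :
    IsCoupling (π.map (fun p => (interpMap d s p, interpMap d t p))) (itp h s) (itp h t) := by
  constructor
  · rw [Measure.map_map measurable_fst ((interpMap_meas s).prodMk (interpMap_meas t))]; rfl
  · rw [Measure.map_map measurable_snd ((interpMap_meas s).prodMk (interpMap_meas t))]; rfl

lemma W2_itp_le {π : Measure (Ed d × Ed d)} {μ ν : P2 d} (h : IsCoupling π μ ν) (s t : ℝ) :
    W2 (itp h s) (itp h t) ≤ |t - s| * Real.sqrt (Wcost π).toReal := by
  have hptwise : ∀ p : Ed d × Ed d,
      (‖interpMap d s p - interpMap d t p‖₊ : ℝ≥0∞) ^ 2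
        = (‖(t - s : ℝ)‖₊ : ℝ≥0∞) ^ 2 * (‖p.1 - p.2‖₊ : ℝ≥0∞) ^ 2 := by
    intro p
    have : interpMap d s p - interpMap d t p = (t - s) • (p.1 - p.2) := by
      simp only [interpMap]
      module
    rw [this, nnnorm_smul]
    push_cast
    ring
  have hcost : Wcost (π.map (fun p => (interpMap d s p, interpMap d t p)))
      = (‖(t - s : ℝ)‖₊ : ℝ≥0∞) ^ 2 * Wcost π := by
    rw [Wcost, lintegral_map cost_meas ((interpMap_meas s).prodMk (interpMap_meas t))]
    simp only [hptwise]
    exact lintegral_cmul_sub _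
  refine (W2_le_of_coupling (isCoupling_itp h s t)).trans ?_
  rw [hcost, ENNReal.toReal_mul]
  have : ((((‖(t - s : ℝ)‖₊ : ℝ≥0∞)) ^ 2).toReal) = |t - s| ^ 2 := by
    simp [← ENNReal.coe_pow, Real.norm_eq_abs, sq_abs]
  rw [this, Real.sqrt_mul (sq_nonneg _), Real.sqrt_sq (abs_nonneg _)]

end B3

namespace B4
open W2Aux B2 ProbabilityTheory
variable {d : ℕ}

example : StandardBorelSpace (Ed d) := inferInstance
example : Nonempty (Ed d) := inferInstance

lemma sqrt_add_le {a b : ℝ} (ha : 0 ≤ a) (hb : 0 ≤ b) :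
    Real.sqrt (a + b) ≤ Real.sqrt a + Real.sqrt b := by
  have h : a + b ≤ (Real.sqrt a + Real.sqrt b) ^ 2 := by
    nlinarith [Real.sq_sqrt ha, Real.sq_sqrt hb, Real.sqrt_nonneg a, Real.sqrt_nonneg b]
  calc Real.sqrt (a + b) ≤ Real.sqrt ((Real.sqrt a + Real.sqrt b) ^ 2) := Real.sqrt_le_sqrt h
    _ = Real.sqrt a + Real.sqrt b := Real.sqrt_sq (by positivity)

lemma eLpNorm_two_eq {α : Type*} [MeasurableSpace α] (f : α → Ed d) (μ : Measure α) :
    eLpNorm f 2 μ = (∫⁻ a, (‖f a‖₊ : ℝ≥0∞) ^ 2 ∂μ) ^ (1/2 : ℝ) := by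
  rw [eLpNorm_eq_lintegral_rpow_enorm two_ne_zero ENNReal.ofNat_ne_top]
  norm_num [enorm_eq_nnnorm]

lemma winf_glue {μ ν ρ : P2 d} {π₁ π₂ : Measure (Ed d × Ed d)}
    (h1 : IsCoupling π₁ μ ν) (h2 : IsCoupling π₂ ν ρ) :
    Winf μ ρ ≤ (Wcost π₁ ^ (1/2 : ℝ) + Wcost π₂ ^ (1/2 : ℝ)) ^ (2 : ℕ) := by
  haveI := coupling_prob h1
  haveI := coupling_prob h2
  set σ : Measure (Ed d × Ed d) := π₁.map Prod.swap with hσ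
  haveI : IsProbabilityMeasure σ := Measure.isProbabilityMeasure_map measurable_swap.aemeasurable
  have hσfst : σ.fst = ν.1 := by
    rw [Measure.fst, hσ, Measure.map_map measurable_fst measurable_swap,
      show (Prod.fst ∘ Prod.swap : Ed d × Ed d → Ed d) = Prod.snd from rfl]
    exact h1.2
  have hπ₂fst : π₂.fst = ν.1 := by rw [Measure.fst]; exact h2.1
  set κ₁ := σ.condKernel with hκ₁
  set κ₂ := π₂.condKernel with hκ₂
  set β : Measure (Ed d × (Ed d × Ed d)) := ν.1 ⊗ₘ (κ₁ ×ₖ κ₂) with hβ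
  haveI : IsProbabilityMeasure ν.1 := ν.2.1
  -- marginal identity 1
  have ha : β.map (fun z => (z.1, z.2.1)) = σ := by
    have hmeas : Measurable (fun z : Ed d × (Ed d × Ed d) => (z.1, z.2.1)) :=
      measurable_fst.prodMk measurable_snd.fst
    have key : β.map (fun z => (z.1, z.2.1)) = ν.1 ⊗ₘ κ₁ := by
      ext s hs
      rw [Measure.map_apply hmeas hs, hβ,
        Measure.compProd_apply (hmeas hs), Measure.compProd_apply hs]
      refine lintegral_congr fun y => ?_
      have hset : (Prod.mk y ⁻¹' ((fun z : Ed d × (Ed d × Ed d) => (z.1, z.2.1)) ⁻¹' s))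
          = Prod.fst ⁻¹' (Prod.mk y ⁻¹' s) := rfl
      rw [hset, Kernel.prod_apply, ← Set.prod_univ, Measure.prod_prod, measure_univ, mul_one]
    rw [key]
    conv_rhs => rw [← σ.disintegrate σ.condKernel]
    rw [hσfst]
  -- marginal identity 2
  have hb : β.map (fun z => (z.1, z.2.2)) = π₂ := by
    have hmeas : Measurable (fun z : Ed d × (Ed d × Ed d) => (z.1, z.2.2)) :=
      measurable_fst.prodMk measurable_snd.snd
    have key : β.map (fun z => (z.1, z.2.2)) = ν.1 ⊗ₘ κ₂ := by
      ext s hs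
      rw [Measure.map_apply hmeas hs, hβ,
        Measure.compProd_apply (hmeas hs), Measure.compProd_apply hs]
      refine lintegral_congr fun y => ?_
      have hset : (Prod.mk y ⁻¹' ((fun z : Ed d × (Ed d × Ed d) => (z.1, z.2.2)) ⁻¹' s))
          = Prod.snd ⁻¹' (Prod.mk y ⁻¹' s) := rfl
      rw [hset, Kernel.prod_apply, ← Set.univ_prod, Measure.prod_prod, measure_univ, one_mul]
    rw [key]
    conv_rhs => rw [← π₂.disintegrate π₂.condKernel]
    rw [hπ₂fst]
  -- the glued coupling
  set π : Measure (Ed d × Ed d) := β.map Prod.snd with hπ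
  have hcoup : IsCoupling π μ ρ := by
    constructor
    · rw [hπ, Measure.map_map measurable_fst measurable_snd,
        show (Prod.fst ∘ Prod.snd : Ed d × (Ed d × Ed d) → Ed d)
          = (Prod.snd ∘ fun z : Ed d × (Ed d × Ed d) => (z.1, z.2.1)) from rfl,
        ← Measure.map_map measurable_snd
          (measurable_fst.prodMk measurable_snd.fst), ha, hσ,
        Measure.map_map measurable_snd measurable_swap,
        show (Prod.snd ∘ Prod.swap : Ed d × Ed d → Ed d) = Prod.fst from rfl]
      exact h1.1
    · rw [hπ, Measure.map_map measurable_snd measurable_snd,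
        show (Prod.snd ∘ Prod.snd : Ed d × (Ed d × Ed d) → Ed d)
          = (Prod.snd ∘ fun z : Ed d × (Ed d × Ed d) => (z.1, z.2.2)) from rfl,
        ← Measure.map_map measurable_snd
          (measurable_fst.prodMk measurable_snd.snd), hb]
      exact h2.2
  -- cost computation
  set F : Ed d × (Ed d × Ed d) → Ed d := fun z => z.2.1 - z.1 with hF
  set G : Ed d × (Ed d × Ed d) → Ed d := fun z => z.1 - z.2.2 with hG
  have hFmeas : Measurable F := (measurable_fst.comp measurable_snd).sub measurable_fst
  have hGmeas : Measurable G := measurable_fst.sub (measurable_snd.comp measurable_snd)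
  have hFG : F + G = fun z => z.2.1 - z.2.2 := by
    funext z
    simp only [hF, hG, Pi.add_apply]
    abel
  have hcostπ : Wcost π = ∫⁻ z, (‖(F + G) z‖₊ : ℝ≥0∞) ^ 2 ∂β := by
    rw [Wcost, hπ, lintegral_map cost_meas measurable_snd, hFG]
  have hcostF : ∫⁻ z, (‖F z‖₊ : ℝ≥0∞) ^ 2 ∂β = Wcost π₁ := by
    have e1 : ∫⁻ z, (‖F z‖₊ : ℝ≥0∞) ^ 2 ∂β
        = ∫⁻ q, (‖q.2 - q.1‖₊ : ℝ≥0∞) ^ 2 ∂(β.map (fun z => (z.1, z.2.1))) := by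
      rw [lintegral_map cost_meas' (measurable_fst.prodMk measurable_snd.fst)]
    rw [e1, ha, hσ, lintegral_map cost_meas' measurable_swap]
    rfl
  have hcostG : ∫⁻ z, (‖G z‖₊ : ℝ≥0∞) ^ 2 ∂β = Wcost π₂ := by
    have e1 : ∫⁻ z, (‖G z‖₊ : ℝ≥0∞) ^ 2 ∂β
        = ∫⁻ q, (‖q.1 - q.2‖₊ : ℝ≥0∞) ^ 2 ∂(β.map (fun z => (z.1, z.2.2))) := by
      rw [lintegral_map cost_meas
        (measurable_fst.prodMk measurable_snd.snd)]
    rw [e1, hb]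
    rfl
  -- Minkowski
  have hmink : eLpNorm (F + G) 2 β ≤ eLpNorm F 2 β + eLpNorm G 2 β :=
    eLpNorm_add_le hFmeas.aestronglyMeasurable hGmeas.aestronglyMeasurable one_le_two
  rw [eLpNorm_two_eq, eLpNorm_two_eq, eLpNorm_two_eq, hcostF, hcostG] at hmink
  have hfinal : Wcost π ≤ (Wcost π₁ ^ (1/2 : ℝ) + Wcost π₂ ^ (1/2 : ℝ)) ^ (2 : ℕ) := by
    rw [hcostπ]
    calc ∫⁻ z, (‖(F + G) z‖₊ : ℝ≥0∞) ^ 2 ∂β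
        = ((∫⁻ z, (‖(F + G) z‖₊ : ℝ≥0∞) ^ 2 ∂β) ^ (1/2 : ℝ)) ^ (2 : ℕ) := by
          rw [← ENNReal.rpow_natCast _ 2, ← ENNReal.rpow_mul]
          norm_num
      _ ≤ (Wcost π₁ ^ (1/2 : ℝ) + Wcost π₂ ^ (1/2 : ℝ)) ^ (2 : ℕ) := by
          exact pow_le_pow_left' hmink 2
  exact (winf_le hcoup).trans hfinal

theorem W2_triangle (μ ν ρ : P2 d) : W2 μ ρ ≤ W2 μ ν + W2 ν ρ := by
  refine le_of_forall_pos_le_add fun ε hε => ?_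
  set δ : ℝ := (ε / 2) ^ 2 with hδ
  have hδpos : 0 < δ := by positivity
  obtain ⟨π₁, hc1, hw1⟩ := exists_coupling_le μ ν (η := ENNReal.ofReal δ)
    (by simp [hδpos.le, ENNReal.ofReal_eq_zero]; linarith)
  obtain ⟨π₂, hc2, hw2⟩ := exists_coupling_le ν ρ (η := ENNReal.ofReal δ)
    (by simp [hδpos.le, ENNReal.ofReal_eq_zero]; linarith)
  have h1top : Wcost π₁ ≠ ⊤ := (wcost_lt_top hc1).ne
  have h2top : Wcost π₂ ≠ ⊤ := (wcost_lt_top hc2).ne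
  have hglue := winf_glue hc1 hc2
  have hsum_ne : (Wcost π₁ ^ (1/2 : ℝ) + Wcost π₂ ^ (1/2 : ℝ)) ^ (2 : ℕ) ≠ ⊤ := by
    apply ENNReal.pow_ne_top
    exact (ENNReal.add_lt_top.2 ⟨ENNReal.rpow_lt_top_of_nonneg (by norm_num) h1top,
      ENNReal.rpow_lt_top_of_nonneg (by norm_num) h2top⟩).ne
  have step1 : W2 μ ρ ≤ (Wcost π₁ ^ (1/2 : ℝ)).toReal + (Wcost π₂ ^ (1/2 : ℝ)).toReal := by
    rw [W2_eq]
    have := ENNReal.toReal_mono hsum_ne hglue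
    refine (Real.sqrt_le_sqrt this).trans ?_
    rw [ENNReal.toReal_pow, Real.sqrt_sq ENNReal.toReal_nonneg, ENNReal.toReal_add
      (ENNReal.rpow_lt_top_of_nonneg (by norm_num) h1top).ne
      (ENNReal.rpow_lt_top_of_nonneg (by norm_num) h2top).ne]
  have hbd1 : (Wcost π₁ ^ (1/2 : ℝ)).toReal ≤ W2 μ ν + ε / 2 := by
    rw [← ENNReal.toReal_rpow, ← Real.sqrt_eq_rpow]
    have hle : (Wcost π₁).toReal ≤ (W2 μ ν) ^ 2 + δ := by
      rw [sq_W2]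
      calc (Wcost π₁).toReal ≤ (Winf μ ν + ENNReal.ofReal δ).toReal :=
            ENNReal.toReal_mono (by
              exact (ENNReal.add_lt_top.2 ⟨winf_lt_top μ ν, ENNReal.ofReal_lt_top⟩).ne) hw1
        _ = (Winf μ ν).toReal + δ := by
            rw [ENNReal.toReal_add (winf_lt_top μ ν).ne ENNReal.ofReal_ne_top,
              ENNReal.toReal_ofReal hδpos.le]
    calc Real.sqrt (Wcost π₁).toReal ≤ Real.sqrt ((W2 μ ν) ^ 2 + δ) := Real.sqrt_le_sqrt hle
      _ ≤ Real.sqrt ((W2 μ ν) ^ 2) + Real.sqrt δ := sqrt_add_le (sq_nonneg _) hδpos.le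
      _ = W2 μ ν + ε / 2 := by
          rw [Real.sqrt_sq (W2_nonneg μ ν), hδ, Real.sqrt_sq (by linarith)]
  have hbd2 : (Wcost π₂ ^ (1/2 : ℝ)).toReal ≤ W2 ν ρ + ε / 2 := by
    rw [← ENNReal.toReal_rpow, ← Real.sqrt_eq_rpow]
    have hle : (Wcost π₂).toReal ≤ (W2 ν ρ) ^ 2 + δ := by
      rw [sq_W2]
      calc (Wcost π₂).toReal ≤ (Winf ν ρ + ENNReal.ofReal δ).toReal :=
            ENNReal.toReal_mono (by
              exact (ENNReal.add_lt_top.2 ⟨winf_lt_top ν ρ, ENNReal.ofReal_lt_top⟩).ne) hw2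
        _ = (Winf ν ρ).toReal + δ := by
            rw [ENNReal.toReal_add (winf_lt_top ν ρ).ne ENNReal.ofReal_ne_top,
              ENNReal.toReal_ofReal hδpos.le]
    calc Real.sqrt (Wcost π₂).toReal ≤ Real.sqrt ((W2 ν ρ) ^ 2 + δ) := Real.sqrt_le_sqrt hle
      _ ≤ Real.sqrt ((W2 ν ρ) ^ 2) + Real.sqrt δ := sqrt_add_le (sq_nonneg _) hδpos.le
      _ = W2 ν ρ + ε / 2 := by
          rw [Real.sqrt_sq (W2_nonneg ν ρ), hδ, Real.sqrt_sq (by linarith)]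
  linarith

end B4

namespace B5
open W2Aux B2 B3 B4
variable {d : ℕ}

instance : Nonempty (P2 d) := ⟨dirac0 d⟩

lemma phi_bdd (mhat : P2 d) (φ : P2 d → ℝ) (hφ : UCmem mhat φ) {r : ℝ} (hr : 0 < r) :
    ∃ C : ℝ, 0 ≤ C ∧ ∀ μ : P2 d, W2 mhat μ ≤ r → φ μ ≤ C := by
  obtain ⟨δ, hδ, huc⟩ := hφ.unif_cont (r + 1) (by linarith) 1 one_pos
  set N : ℕ := ⌈(r + 1) / δ⌉₊ with hN
  have hN1 : 1 ≤ N := Nat.one_le_ceil_iff.2 (by positivity)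
  have hNR : (r + 1) / δ ≤ (N : ℝ) := Nat.le_ceil _
  have hNpos : (0 : ℝ) < N := by exact_mod_cast hN1
  refine ⟨N, by positivity, fun μ hμ => ?_⟩
  obtain ⟨π, hπ, hw⟩ := exists_coupling_le mhat μ (η := 1) one_ne_zero
  set c : ℝ := (Wcost π).toReal with hc
  have hcfin : Wcost π ≠ ⊤ := (wcost_lt_top hπ).ne
  have hcle : c ≤ r ^ 2 + 1 := by
    have h1 : (Wcost π).toReal ≤ (Winf mhat μ + 1).toReal :=
      ENNReal.toReal_mono (by
        exact (ENNReal.add_lt_top.2 ⟨winf_lt_top mhat μ, by norm_num⟩).ne) hw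
    rw [ENNReal.toReal_add (winf_lt_top mhat μ).ne ENNReal.one_ne_top] at h1
    have h2 : (Winf mhat μ).toReal = W2 mhat μ ^ 2 := (sq_W2 mhat μ).symm
    have h3 : W2 mhat μ ^ 2 ≤ r ^ 2 := by
      have := W2_nonneg mhat μ
      nlinarith
    simp only [ENNReal.toReal_one] at h1
    linarith
  have hcnn : 0 ≤ c := ENNReal.toReal_nonneg
  have hsqrtc : Real.sqrt c ≤ r + 1 := by
    have h := Real.sqrt_le_sqrt (show c ≤ (r + 1) ^ 2 by nlinarith)
    rwa [Real.sqrt_sq (by linarith)] at h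
  have hsq0 : 0 ≤ Real.sqrt c := Real.sqrt_nonneg _
  have ht : ∀ i : ℕ, i ≤ N → W2 mhat (itp hπ ((i : ℝ) / N)) ≤ r + 1 := by
    intro i hi
    have hdiv : 0 ≤ (i : ℝ) / N := by positivity
    have hdiv1 : (i : ℝ) / N ≤ 1 := by
      rw [div_le_one hNpos]
      exact_mod_cast hi
    calc W2 mhat (itp hπ ((i : ℝ) / N)) = W2 (itp hπ 0) (itp hπ ((i : ℝ) / N)) := by
          rw [itp_zero hπ]
      _ ≤ |(i : ℝ) / N - 0| * Real.sqrt c := W2_itp_le hπ 0 _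
      _ ≤ 1 * (r + 1) := by
          rw [sub_zero, abs_of_nonneg hdiv]
          exact mul_le_mul hdiv1 hsqrtc hsq0 zero_le_one
      _ = r + 1 := one_mul _
  have hstepb : ∀ i : ℕ, W2 (itp hπ ((i : ℝ) / N)) (itp hπ (((i : ℕ) + 1 : ℝ) / N)) ≤ δ := by
    intro i
    have e : |((i : ℕ) + 1 : ℝ) / N - (i : ℝ) / N| = 1 / N := by
      rw [div_sub_div_same]
      rw [show ((i : ℕ) + 1 : ℝ) - (i : ℝ) = 1 by ring]
      rw [abs_of_nonneg (by positivity)]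
    calc W2 (itp hπ ((i : ℝ) / N)) (itp hπ (((i : ℕ) + 1 : ℝ) / N))
        ≤ |((i : ℕ) + 1 : ℝ) / N - (i : ℝ) / N| * Real.sqrt c := W2_itp_le hπ _ _
      _ = Real.sqrt c / N := by rw [e]; ring
      _ ≤ (r + 1) / N := by gcongr
      _ ≤ δ := by
          rw [div_le_iff₀ hNpos]
          calc r + 1 = ((r + 1) / δ) * δ := by field_simp
            _ ≤ (N : ℝ) * δ := mul_le_mul_of_nonneg_right hNR hδ.le
            _ = δ * N := mul_comm _ _
  have key : ∀ i : ℕ, i ≤ N → φ (itp hπ ((i : ℝ) / N)) ≤ i := by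
    intro i
    induction i with
    | zero =>
        intro _
        simp only [Nat.cast_zero, zero_div, itp_zero hπ, hφ.zero_at, le_refl]
    | succ i ih =>
        intro hi
        have hii := ih (Nat.le_of_succ_le hi)
        have habs : |φ (itp hπ (((i + 1 : ℕ) : ℝ) / N)) - φ (itp hπ ((i : ℝ) / N))| ≤ 1 := by
          refine huc _ _ (ht (i + 1) hi) (ht i (Nat.le_of_succ_le hi)) ?_
          rw [W2_symm]
          have := hstepb i
          push_cast at this ⊢
          exact this
        have h1 := (abs_sub_le_iff.1 habs).1
        push_cast
        push_cast at hii h1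
        linarith
  have := key N le_rfl
  rw [div_self hNpos.ne', itp_one hπ] at this
  exact this

end B5

namespace B6
open W2Aux B2 B3 B4 B5
variable {d : ℕ}

lemma Ifun_le {mhat : P2 d} {φ : P2 d → ℝ} {R : ℝ} (hφ : UCmem mhat φ) {μ : P2 d}
    (hμ : ¬ W2 mhat μ < R) : Ifun mhat φ R ≤ φ μ := by
  refine csInf_le ⟨0, ?_⟩ ⟨μ, hμ, rfl⟩
  rintro x ⟨y, -, rfl⟩
  exact hφ.nonneg y

lemma sphere_point (mhat : P2 d) {R : ℝ} (hR : 0 < R) (φ : P2 d → ℝ) (hφ : UCmem mhat φ)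
    {κ : ℝ} (hκ : 0 < κ) {m : P2 d}
    (hm : infConv φ κ m ≤ Ifun mhat φ R / 2) (hnot : ¬ W2 mhat m < R)
    {η : ℝ} (hη : 0 < η) (hηI : Ifun mhat φ R / 2 + η < Ifun mhat φ R) :
    ∃ ν mp : P2 d, φ ν ≤ Ifun mhat φ R / 2 + η ∧ W2 mhat mp = R ∧
      W2 mp ν ≤ κ * Real.sqrt (Ifun mhat φ R + 3 * η) := by
  set I := Ifun mhat φ R with hI
  have hlt : infConv φ κ m < I / 2 + η := lt_of_le_of_lt hm (by linarith)
  obtain ⟨ν, hν⟩ := exists_lt_of_ciInf_lt hlt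
  have hφν : 0 ≤ φ ν := hφ.nonneg ν
  have hw2 : 0 ≤ W2 m ν ^ 2 := sq_nonneg _
  have hcoef : 0 < 1 / (2 * κ ^ 2) := by positivity
  have hφνlt : φ ν < I / 2 + η := by nlinarith [mul_nonneg hcoef.le hw2]
  have hWν : W2 m ν ^ 2 < κ ^ 2 * (I + 2 * η) := by
    have h2 : 1 / (2 * κ ^ 2) * W2 m ν ^ 2 < I / 2 + η := by linarith
    have h3 := mul_lt_mul_of_pos_left h2 (show (0:ℝ) < 2 * κ ^ 2 by positivity)
    calc W2 m ν ^ 2 = 2 * κ ^ 2 * (1 / (2 * κ ^ 2) * W2 m ν ^ 2) := by field_simp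
      _ < 2 * κ ^ 2 * (I / 2 + η) := h3
      _ = κ ^ 2 * (I + 2 * η) := by ring
  have hνO : W2 mhat ν < R := by
    by_contra hc
    have := Ifun_le hφ hc
    rw [← hI] at this
    linarith
  -- near-optimal coupling from ν to m
  have hκη : (ENNReal.ofReal (κ ^ 2 * η)) ≠ 0 := by
    simp only [ne_eq, ENNReal.ofReal_eq_zero, not_le]
    positivity
  obtain ⟨π, hπ, hw⟩ := exists_coupling_le ν m hκη
  set c : ℝ := (Wcost π).toReal with hc
  have hcnn : 0 ≤ c := ENNReal.toReal_nonneg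
  have hcle : c ≤ κ ^ 2 * (I + 3 * η) := by
    have h1 : (Wcost π).toReal ≤ (Winf ν m + ENNReal.ofReal (κ ^ 2 * η)).toReal :=
      ENNReal.toReal_mono
        (by exact (ENNReal.add_lt_top.2 ⟨winf_lt_top ν m, ENNReal.ofReal_lt_top⟩).ne) hw
    rw [ENNReal.toReal_add (winf_lt_top ν m).ne ENNReal.ofReal_ne_top,
      ENNReal.toReal_ofReal (by positivity)] at h1
    have h2 : (Winf ν m).toReal = W2 ν m ^ 2 := (sq_W2 ν m).symm
    have h3 : W2 ν m ^ 2 = W2 m ν ^ 2 := by rw [W2_symm]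
    nlinarith
  have hsq0 : 0 ≤ Real.sqrt c := Real.sqrt_nonneg _
  -- the curve
  set g : ℝ → ℝ := fun t => W2 mhat (itp hπ t) with hg
  have key : ∀ s t : ℝ, g t - g s ≤ |t - s| * Real.sqrt c := by
    intro s t
    have h1 : W2 mhat (itp hπ t) ≤ W2 mhat (itp hπ s) + W2 (itp hπ s) (itp hπ t) :=
      W2_triangle _ _ _
    have h3 : W2 (itp hπ s) (itp hπ t) ≤ |t - s| * Real.sqrt c := W2_itp_le hπ s t
    have h4 : g t ≤ g s + W2 (itp hπ s) (itp hπ t) := h1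
    linarith
  have hcont : Continuous g := by
    refine lipschitzWith_iff_dist_le_mul.2 (fun s t => ?_) |>.continuous
      (K := (⟨Real.sqrt c, hsq0⟩ : ℝ≥0))
    rw [Real.dist_eq, Real.dist_eq]
    change _ ≤ Real.sqrt c * _
    rw [abs_sub_le_iff]
    constructor
    · rw [mul_comm]
      exact key t s
    · rw [mul_comm, abs_sub_comm]
      exact key s t
  have hg0 : g 0 = W2 mhat ν := by rw [hg]; simp only; rw [itp_zero hπ]
  have hg1 : g 1 = W2 mhat m := by rw [hg]; simp only; rw [itp_one hπ]
  have hR' : R ∈ Icc (g 0) (g 1) := by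
    constructor
    · rw [hg0]; exact hνO.le
    · rw [hg1]; exact not_lt.1 hnot
  obtain ⟨t, ht01, hgt⟩ := intermediate_value_Icc zero_le_one hcont.continuousOn hR'
  refine ⟨ν, itp hπ t, hφνlt.le, hgt, ?_⟩
  have h4 : W2 (itp hπ t) ν = W2 (itp hπ t) (itp hπ 0) := by rw [itp_zero hπ]
  have h5 : W2 (itp hπ t) (itp hπ 0) ≤ |(0 : ℝ) - t| * Real.sqrt c := W2_itp_le hπ t 0
  have h6 : |(0 : ℝ) - t| ≤ 1 := by
    rw [abs_sub_comm, sub_zero, abs_of_nonneg ht01.1]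
    exact ht01.2
  have h7 : Real.sqrt c ≤ κ * Real.sqrt (I + 3 * η) := by
    have := Real.sqrt_le_sqrt hcle
    rwa [show κ ^ 2 * (I + 3 * η) = (κ * Real.sqrt (I + 3 * η)) ^ 2 by
        rw [mul_pow, Real.sq_sqrt (by nlinarith)],
      Real.sqrt_sq (by positivity)] at this
  rw [h4]
  calc W2 (itp hπ t) (itp hπ 0) ≤ |(0 : ℝ) - t| * Real.sqrt c := h5
    _ ≤ 1 * (κ * Real.sqrt (I + 3 * η)) := mul_le_mul h6 h7 hsq0 zero_le_one
    _ = κ * Real.sqrt (I + 3 * η) := one_mul _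

end B6

namespace B7
open W2Aux B2 B3 B4 B5 B6
variable {d : ℕ}

set_option maxHeartbeats 2000000 in
theorem main {d : ℕ} (mhat : P2 d) (R : ℝ) (hR : 0 < R)
    (φ : P2 d → ℝ) (hφ : UCmem mhat φ) (κ ε : ℝ) (hκ : κ ∈ Ioc (0 : ℝ) 1)
    (hε : ε ∈ Ioc (0 : ℝ) 1)
    (hsmall : omegaR mhat φ ε R (Mke mhat φ κ ε R)
        + ε * κ * Real.sqrt (Ifun mhat φ R) + ε * Mke mhat φ κ ε R
        < Ifun mhat φ R / 2) :
    GsetK mhat φ κ R ⊆ oballW mhat R := by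
  obtain ⟨hκ0, hκ1⟩ := hκ
  obtain ⟨hε0, hε1⟩ := hε
  intro m hm
  by_contra hnot
  have hm' : infConv φ κ m ≤ Ifun mhat φ R / 2 := hm
  have hnot' : ¬ W2 mhat m < R := hnot
  set I := Ifun mhat φ R with hI
  set S := Sfun mhat φ R with hS
  set Mk := Mke mhat φ κ ε R with hMk
  set ω := omegaR mhat φ ε R Mk with hω
  set K := ε * κ * Real.sqrt I with hK
  -- nonnegativity facts
  have hS0 : 0 ≤ S := Real.sSup_nonneg (by rintro x ⟨y, -, rfl⟩; exact hφ.nonneg y)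
  have hω0 : 0 ≤ ω := Real.sSup_nonneg (by rintro x ⟨ν₁, ν₂, -, -, -, rfl⟩; exact abs_nonneg _)
  have hsqI0 : 0 ≤ Real.sqrt I := Real.sqrt_nonneg _
  have hK0 : 0 ≤ K := by positivity
  have hMk0 : 0 ≤ Mk := by
    rw [hMk, Mke, ← hS,
      show (2 : ℝ) * S + ε ^ 2 * κ ^ 2 = 2 * S + (ε * κ) ^ 2 by ring]
    have h1 : Real.sqrt ((ε * κ) ^ 2) ≤ Real.sqrt (2 * S + (ε * κ) ^ 2) :=
      Real.sqrt_le_sqrt (by nlinarith)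
    rw [Real.sqrt_sq (by positivity)] at h1
    nlinarith
  have hI0 : 0 < I := by nlinarith
  have hKpos : 0 < K := by
    have : 0 < Real.sqrt I := Real.sqrt_pos.2 hI0
    positivity
  have hKI : K < I / 2 := by nlinarith
  -- pass 1 : I ≤ S
  have hIS : I ≤ S := by
    obtain ⟨ν₁, mp₁, -, hWmp₁, -⟩ := sphere_point mhat hR φ hφ hκ0 hm' hnot'
      (show (0:ℝ) < I / 4 by linarith) (by linarith)
    have h1 : I ≤ φ mp₁ := Ifun_le hφ (by rw [hWmp₁]; exact lt_irrefl R)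
    obtain ⟨C, hC0, hC⟩ := phi_bdd mhat φ hφ hR
    have h2 : φ mp₁ ≤ S := by
      refine le_csSup ⟨C, ?_⟩ ⟨mp₁, hWmp₁.le, rfl⟩
      rintro x ⟨y, hy, rfl⟩
      exact hC y hy
    linarith
  -- choice of η
  set γ := I - 2 * K with hγ
  have hγ0 : 0 < γ := by rw [hγ]; linarith
  set η := min (γ ^ 2 / 48) (min (γ / 6) (min (I / 4) (K / 2))) with hη
  have hη0 : 0 < η := by
    rw [hη]
    refine lt_min (by positivity) (lt_min (by positivity) (lt_min (by linarith) (by linarith)))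
  have hη1 : η ≤ γ ^ 2 / 48 := min_le_left _ _
  have hη2 : η ≤ γ / 6 := (min_le_right _ _).trans (min_le_left _ _)
  have hη3 : η ≤ I / 4 := ((min_le_right _ _).trans (min_le_right _ _)).trans (min_le_left _ _)
  have hη4 : η ≤ K / 2 := ((min_le_right _ _).trans (min_le_right _ _)).trans (min_le_right _ _)
  -- pass 2
  obtain ⟨ν, mp, hφν, hWmp, hWmpν⟩ := sphere_point mhat hR φ hφ hκ0 hm' hnot' hη0 (by linarith)
  have hsq3η : Real.sqrt (3 * η) ≤ γ / 4 := by
    have h1 : Real.sqrt (3 * η) ≤ Real.sqrt ((γ / 4) ^ 2) := Real.sqrt_le_sqrt (by nlinarith)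
    rwa [Real.sqrt_sq (by linarith)] at h1
  have hsplit : Real.sqrt (I + 3 * η) ≤ Real.sqrt I + Real.sqrt (3 * η) :=
    sqrt_add_le hI0.le (by linarith)
  have hsqI3 : 0 ≤ Real.sqrt (I + 3 * η) := Real.sqrt_nonneg _
  have hεκ : ε * κ ≤ 1 := by nlinarith
  -- key bound : κ √(I+3η) ≤ Mk
  have hMkb : κ * Real.sqrt (I + 3 * η) ≤ Mk := by
    have hsum : I + 3 * η + 2 * (ε * κ) * Real.sqrt (I + 3 * η) ≤ 2 * S := by
      have h1 : 2 * (ε * κ) * Real.sqrt (I + 3 * η)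
          ≤ 2 * (ε * κ) * (Real.sqrt I + Real.sqrt (3 * η)) := by
        apply mul_le_mul_of_nonneg_left hsplit (by positivity)
      have h2 : 2 * (ε * κ) * (Real.sqrt I + Real.sqrt (3 * η))
          = 2 * K + 2 * (ε * κ) * Real.sqrt (3 * η) := by rw [hK]; ring
      have h3 : 2 * (ε * κ) * Real.sqrt (3 * η) ≤ 2 * Real.sqrt (3 * η) := by
        nlinarith [Real.sqrt_nonneg (3 * η)]
      have h4 : 2 * Real.sqrt (3 * η) ≤ γ / 2 := by linarith
      have h5 : 3 * η ≤ γ / 2 := by linarith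
      have h6 : I + γ ≤ 2 * S := by rw [hγ]; linarith
      linarith
    have hsq : (Real.sqrt (I + 3 * η) + ε * κ) ^ 2 ≤ 2 * S + ε ^ 2 * κ ^ 2 := by
      have := Real.sq_sqrt (show (0:ℝ) ≤ I + 3 * η by linarith)
      nlinarith
    have h7 : Real.sqrt (I + 3 * η) + ε * κ ≤ Real.sqrt (2 * S + ε ^ 2 * κ ^ 2) := by
      have h8 := Real.sqrt_le_sqrt hsq
      rwa [Real.sqrt_sq (by positivity)] at h8
    rw [hMk, Mke, ← hS]
    nlinarith
  -- membership bounds for ω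
  have hsqrt2S : 0 ≤ Real.sqrt (2 * S + ε ^ 2) := Real.sqrt_nonneg _
  have hmpMe : W2 mhat mp ≤ Me mhat φ ε R := by
    rw [Me, hWmp, ← hS]
    linarith
  have hκI3 : κ * Real.sqrt (I + 3 * η) ≤ Real.sqrt (2 * S + ε ^ 2) := by
    have h1 : Real.sqrt (I + 3 * η) ≤ Real.sqrt (2 * S + ε ^ 2) := by
      apply Real.sqrt_le_sqrt
      have : 3 * η ≤ γ / 2 := by linarith
      have : γ ≤ I := by rw [hγ]; linarith
      nlinarith
    nlinarith
  have hνMe : W2 mhat ν ≤ Me mhat φ ε R := by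
    have h1 : W2 mhat ν ≤ W2 mhat mp + W2 mp ν := W2_triangle _ _ _
    rw [Me, ← hS]
    have : W2 mp ν ≤ Real.sqrt (2 * S + ε ^ 2) := hWmpν.trans hκI3
    rw [hWmp] at h1
    linarith
  have hWmpν' : W2 mp ν ≤ Mk := hWmpν.trans hMkb
  -- ω bound
  obtain ⟨C2, hC20, hC2⟩ := phi_bdd mhat φ hφ (show (0:ℝ) < Me mhat φ ε R by
    rw [Me, ← hS]; linarith)
  have hbdd : BddAbove {c : ℝ | ∃ ν₁ ν₂ : P2 d, W2 ν₁ ν₂ ≤ Mk ∧ W2 mhat ν₁ ≤ Me mhat φ ε R ∧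
      W2 mhat ν₂ ≤ Me mhat φ ε R ∧ c = |φ ν₁ - φ ν₂|} := by
    refine ⟨2 * C2, ?_⟩
    rintro x ⟨ν₁, ν₂, -, h1, h2, rfl⟩
    have := abs_sub (φ ν₁) (φ ν₂)
    rw [abs_of_nonneg (hφ.nonneg ν₁), abs_of_nonneg (hφ.nonneg ν₂)] at this
    have b1 := hC2 ν₁ h1
    have b2 := hC2 ν₂ h2
    linarith
  have hmem : |φ mp - φ ν| ∈ {c : ℝ | ∃ ν₁ ν₂ : P2 d, W2 ν₁ ν₂ ≤ Mk ∧
      W2 mhat ν₁ ≤ Me mhat φ ε R ∧ W2 mhat ν₂ ≤ Me mhat φ ε R ∧ c = |φ ν₁ - φ ν₂|} :=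
    ⟨mp, ν, hWmpν', hmpMe, hνMe, rfl⟩
  have hωb : φ mp - φ ν ≤ ω := by
    refine (le_abs_self _).trans ?_
    rw [hω, omegaR]
    exact le_csSup hbdd hmem
  -- final contradiction
  have hImp : I ≤ φ mp := Ifun_le hφ (by rw [hWmp]; exact lt_irrefl R)
  have hεMk : 0 ≤ ε * Mk := by positivity
  -- hsmall : ω + K + ε * Mk < I / 2
  have : K < η := by linarith
  linarith

end B7

/-- `G_R^κ ⊆ O_R(m̂)` under a smallness condition. -/
theorem statement7 {d : ℕ} (mhat : P2 d) (R : ℝ) (hR : 0 < R)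
    (φ : P2 d → ℝ) (hφ : UCmem mhat φ) (κ ε : ℝ) (hκ : κ ∈ Ioc (0 : ℝ) 1)
    (hε : ε ∈ Ioc (0 : ℝ) 1)
    (hek : ∀ m ∈ GsetK mhat φ κ R, ∃ μb : P2 d, EkelandPt φ κ ε m μb)
    (hsmall : omegaR mhat φ ε R (Mke mhat φ κ ε R)
        + ε * κ * Real.sqrt (Ifun mhat φ R) + ε * Mke mhat φ κ ε R
        < Ifun mhat φ R / 2) :
    GsetK mhat φ κ R ⊆ oballW mhat R := by
  exact B7.main mhat R hR φ hφ κ ε hκ hε hsmall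
end
end

section
/- Let φ : P₂(ℝ^d) → [0,∞), κ ∈ (0,1], ε > 0, m ∈ P₂(ℝ^d), let μ̄ be an Ekeland point for (φ,κ,ε,m), and let π ∈ Π_o(m,μ̄) be an optimal plan. Define χ_κ(z₁,z₂) = (z₂, (z₁−z₂)/κ²) and γ = (χ_κ)♯π ∈ P₂(ℝ^d×ℝ^d). Then γ is a proximal ε-subgradient of φ at μ̄, i.e. γ ∈ ∂_P^ε φ(μ̄); in fact the defining inequality holds with σ = 1/(2κ²) for all μ ∈ P₂(ℝ^d). -/
open MeasureTheory Set Filter Topology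
open scoped ENNReal NNReal InnerProductSpace

noncomputable section

section Statement8Aux

open MeasureTheory

private lemma ofReal_norm_eq_coe_nnnorm {E : Type*} [NormedAddCommGroup E] (a : E) :
    ENNReal.ofReal ‖a‖ = (‖a‖₊ : ℝ≥0∞) := ENNReal.ofReal_eq_coe_nnreal (norm_nonneg a)

private lemma integral_normsq_eq_toReal' {α E : Type*} [MeasurableSpace α]
    [NormedAddCommGroup E] {ν : Measure α} {f : α → E}
    (hf : AEStronglyMeasurable f ν) :
    ∫ a, ‖f a‖ ^ 2 ∂ν = (∫⁻ a, (‖f a‖₊ : ℝ≥0∞) ^ 2 ∂ν).toReal := by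
  rw [integral_eq_lintegral_of_nonneg_ae (ae_of_all _ fun a => sq_nonneg _)
    (hf.norm.pow 2)]
  congr 1
  refine lintegral_congr fun a => ?_
  rw [← ofReal_norm_eq_coe_nnnorm, ← ENNReal.ofReal_pow (norm_nonneg _)]

private lemma ennreal_add_sq_le (a b : ℝ≥0∞) : (a + b) ^ 2 ≤ 4 * (a ^ 2 + b ^ 2) := by
  have hab : a * b ≤ a ^ 2 + b ^ 2 := by
    rcases le_total a b with h | h
    · calc a * b ≤ b * b := mul_le_mul' h le_rfl
        _ = b ^ 2 := (sq b).symm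
        _ ≤ a ^ 2 + b ^ 2 := le_add_self
    · calc a * b ≤ a * a := mul_le_mul' le_rfl h
        _ = a ^ 2 := (sq a).symm
        _ ≤ a ^ 2 + b ^ 2 := le_self_add
  calc (a + b) ^ 2 = a ^ 2 + b ^ 2 + 2 * (a * b) := by ring
    _ ≤ a ^ 2 + b ^ 2 + 2 * (a ^ 2 + b ^ 2) := by gcongr
    _ = 3 * (a ^ 2 + b ^ 2) := by ring
    _ ≤ 4 * (a ^ 2 + b ^ 2) := mul_le_mul' (by norm_num) le_rfl

end Statement8Aux

set_option maxHeartbeats 1000000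
set_option synthInstance.maxHeartbeats 1000000

/-- the pushforward of an optimal plan by `χ_κ` is a proximal
`ε`-subgradient at the Ekeland point. -/
theorem statement8 {d : ℕ} (φ : P2 d → ℝ) (hφ : ∀ μ : P2 d, 0 ≤ φ μ)
    (κ ε : ℝ) (hκ : κ ∈ Ioc (0 : ℝ) 1) (hε : 0 < ε)
    (m μb : P2 d) (hek : EkelandPt φ κ ε m μb)
    (π : Measure (Ed d × Ed d)) (hπ : IsOptPlan π m μb)
    (γ : Measure (Ed d × Ed d))
    (hγ : γ = π.map fun z => (z.2, (κ ^ 2)⁻¹ • (z.1 - z.2))) :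
    ProxSubgrad φ ε μb γ ∧ ∀ μ : P2 d, ProxIneq φ ε (1 / (2 * κ ^ 2)) μb γ μ := by
  obtain ⟨hκ0, hκ1⟩ := hκ
  obtain ⟨⟨hπm, hπμb⟩, hπopt⟩ := hπ
  have hκ2 : (0 : ℝ) < κ ^ 2 := by positivity
  haveI : OpensMeasurableSpace (Ed d × Ed d) := inferInstance
  haveI : OpensMeasurableSpace (Ed d × Ed d × Ed d) := inferInstance
  haveI hmprob : IsProbabilityMeasure m.1 := m.2.1
  haveI hμbprob : IsProbabilityMeasure μb.1 := μb.2.1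
  haveI hπprob : IsProbabilityMeasure π := by
    constructor
    have h : π.map Prod.fst Set.univ = 1 := by rw [hπm]; exact measure_univ
    rwa [Measure.map_apply measurable_fst MeasurableSet.univ, Set.preimage_univ] at h
  have hχc : Continuous fun z : Ed d × Ed d => (z.2, (κ ^ 2)⁻¹ • (z.1 - z.2)) := by fun_prop
  have hnsq : Measurable fun x : Ed d => (‖x‖₊ : ℝ≥0∞) ^ 2 :=
    measurable_nnnorm.coe_nnreal_ennreal.pow_const 2
  -- finiteness of the optimal cost
  have hprodc : IsCoupling (m.1.prod μb.1) m μb := by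
    constructor
    · rw [Measure.map_fst_prod]; simp
    · rw [Measure.map_snd_prod]; simp
  have hWfin : Wcost π ≠ ⊤ := by
    have hle := hπopt _ hprodc
    have hb : Wcost (m.1.prod μb.1) < ⊤ := by
      have h1 : Wcost (m.1.prod μb.1) ≤
          ∫⁻ p : Ed d × Ed d, 4 * ((‖p.1‖₊ : ℝ≥0∞) ^ 2 + (‖p.2‖₊ : ℝ≥0∞) ^ 2)
            ∂(m.1.prod μb.1) := by
        refine lintegral_mono fun p => ?_
        refine le_trans ?_ (ennreal_add_sq_le _ _)
        have : (‖p.1 - p.2‖₊ : ℝ≥0∞) ≤ (‖p.1‖₊ : ℝ≥0∞) + (‖p.2‖₊ : ℝ≥0∞) := by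
          exact_mod_cast nnnorm_sub_le p.1 p.2
        exact pow_le_pow_left' this 2
      have h2 : ∫⁻ p : Ed d × Ed d, (‖p.1‖₊ : ℝ≥0∞) ^ 2 ∂(m.1.prod μb.1)
          = ∫⁻ x, (‖x‖₊ : ℝ≥0∞) ^ 2 ∂m.1 := by
        conv_rhs => rw [← hprodc.1]
        rw [lintegral_map hnsq measurable_fst]
      have h3 : ∫⁻ p : Ed d × Ed d, (‖p.2‖₊ : ℝ≥0∞) ^ 2 ∂(m.1.prod μb.1)
          = ∫⁻ x, (‖x‖₊ : ℝ≥0∞) ^ 2 ∂μb.1 := by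
        conv_rhs => rw [← hprodc.2]
        rw [lintegral_map hnsq measurable_snd]
      calc Wcost (m.1.prod μb.1) ≤ _ := h1
        _ = 4 * (∫⁻ p : Ed d × Ed d, (‖p.1‖₊ : ℝ≥0∞) ^ 2 ∂(m.1.prod μb.1)
            + ∫⁻ p : Ed d × Ed d, (‖p.2‖₊ : ℝ≥0∞) ^ 2 ∂(m.1.prod μb.1)) := by
          have hm1 : Measurable fun p : Ed d × Ed d => (‖p.1‖₊ : ℝ≥0∞) ^ 2 :=
            measurable_fst.nnnorm.coe_nnreal_ennreal.pow_const 2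
          have hm2 : Measurable fun p : Ed d × Ed d => (‖p.2‖₊ : ℝ≥0∞) ^ 2 :=
            measurable_snd.nnnorm.coe_nnreal_ennreal.pow_const 2
          rw [lintegral_const_mul' _ _ (by norm_num), lintegral_add_left hm1]
        _ < ⊤ := by
          rw [h2, h3]
          exact ENNReal.mul_lt_top (by norm_num)
            (ENNReal.add_lt_top.2 ⟨m.2.2, μb.2.2⟩)
    exact (lt_of_le_of_lt hle hb).ne
  have hinf : (⨅ π' ∈ {π' : Measure (Ed d × Ed d) | IsCoupling π' m μb}, Wcost π')
      = Wcost π :=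
    le_antisymm (iInf₂_le π ⟨hπm, hπμb⟩) (le_iInf₂ fun π' h => hπopt π' h)
  have hWb2 : W2 m μb ^ 2 = (Wcost π).toReal := by
    rw [W2, hinf, Real.sq_sqrt ENNReal.toReal_nonneg]
  -- the main inequality for every μ
  have key : ∀ μ : P2 d, ProxIneq φ ε (1 / (2 * κ ^ 2)) μb γ μ := by
    intro μ β hβ hβ12 hβ13
    haveI hβprob : IsProbabilityMeasure β := hβ.1
    have hc12 : Continuous fun z : Ed d × Ed d × Ed d => (z.1, z.2.1) := by fun_prop
    have hc13 : Continuous fun z : Ed d × Ed d × Ed d => (z.1, z.2.2) := by fun_prop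
    have hTc : Continuous fun z : Ed d × Ed d × Ed d => (z.1 + (κ ^ 2) • z.2.2, z.2.1) := by
      fun_prop
    -- integrability facts
    have hgint : Integrable (fun z : Ed d × Ed d × Ed d => ‖z‖ ^ 2) β := by
      refine ⟨(continuous_norm.pow 2).aestronglyMeasurable, ?_⟩
      simpa [HasFiniteIntegral, nnnorm_pow, nnnorm_norm, ENNReal.coe_pow] using
        (show ∫⁻ x, ‖x‖ₑ ^ 2 ∂β < ⊤ from hβ.2)
    have hz1 : ∀ z : Ed d × Ed d × Ed d, ‖z.1‖ ≤ ‖z‖ := fun z => norm_fst_le z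
    have hz21 : ∀ z : Ed d × Ed d × Ed d, ‖z.2.1‖ ≤ ‖z‖ :=
      fun z => (norm_fst_le z.2).trans (norm_snd_le z)
    have hz22 : ∀ z : Ed d × Ed d × Ed d, ‖z.2.2‖ ≤ ‖z‖ :=
      fun z => (norm_snd_le z.2).trans (norm_snd_le z)
    have hintA : Integrable (fun z : Ed d × Ed d × Ed d => ⟪z.2.2, z.2.1 - z.1⟫_ℝ) β := by
      refine (hgint.const_mul 2).mono
        ((Continuous.inner (by fun_prop) (by fun_prop)).aestronglyMeasurable)
        (ae_of_all _ fun z => ?_)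
      have h4 := abs_real_inner_le_norm z.2.2 (z.2.1 - z.1)
      have h5 : ‖z.2.1 - z.1‖ ≤ ‖z.2.1‖ + ‖z.1‖ := norm_sub_le _ _
      rw [Real.norm_eq_abs, Real.norm_eq_abs,
        abs_of_nonneg (by positivity : (0:ℝ) ≤ 2 * ‖z‖ ^ 2)]
      nlinarith [hz1 z, hz21 z, hz22 z, norm_nonneg z, norm_nonneg z.2.2,
        norm_nonneg (z.2.1 - z.1)]
    have hintB : Integrable (fun z : Ed d × Ed d × Ed d => ‖z.2.1 - z.1‖ ^ 2) β := by
      refine (hgint.const_mul 4).mono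
        ((by fun_prop : Continuous fun z : Ed d × Ed d × Ed d =>
          ‖z.2.1 - z.1‖ ^ 2).aestronglyMeasurable) (ae_of_all _ fun z => ?_)
      have h5 : ‖z.2.1 - z.1‖ ≤ ‖z.2.1‖ + ‖z.1‖ := norm_sub_le _ _
      rw [Real.norm_eq_abs, Real.norm_eq_abs,
        abs_of_nonneg (by positivity : (0:ℝ) ≤ 4 * ‖z‖ ^ 2),
        abs_of_nonneg (by positivity : (0:ℝ) ≤ ‖z.2.1 - z.1‖ ^ 2)]
      nlinarith [hz1 z, hz21 z, norm_nonneg z, norm_nonneg (z.2.1 - z.1)]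
    have hintC : Integrable (fun z : Ed d × Ed d × Ed d => ‖z.2.2‖ ^ 2) β := by
      refine hgint.mono
        ((by fun_prop : Continuous fun z : Ed d × Ed d × Ed d =>
          ‖z.2.2‖ ^ 2).aestronglyMeasurable) (ae_of_all _ fun z => ?_)
      rw [Real.norm_eq_abs, Real.norm_eq_abs,
        abs_of_nonneg (by positivity : (0:ℝ) ≤ ‖z‖ ^ 2),
        abs_of_nonneg (by positivity : (0:ℝ) ≤ ‖z.2.2‖ ^ 2)]
      nlinarith [hz22 z, norm_nonneg z, norm_nonneg z.2.2]
    -- the second moment of p under β equals the optimal cost (rescaled)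
    have hC : ∫ z, ‖z.2.2‖ ^ 2 ∂β = ((κ ^ 2)⁻¹) ^ 2 * (Wcost π).toReal := by
      have e1 : ∫ q : Ed d × Ed d, ‖q.2‖ ^ 2 ∂(β.map fun z => (z.1, z.2.2))
          = ∫ z, ‖z.2.2‖ ^ 2 ∂β :=
        integral_map hc13.measurable.aemeasurable
          ((by fun_prop : Continuous fun q : Ed d × Ed d => ‖q.2‖ ^ 2).aestronglyMeasurable)
      rw [← e1, hβ13, hγ, integral_map hχc.measurable.aemeasurable
        ((by fun_prop : Continuous fun q : Ed d × Ed d => ‖q.2‖ ^ 2).aestronglyMeasurable)]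
      have e2 : ∀ z : Ed d × Ed d, ‖(κ ^ 2)⁻¹ • (z.1 - z.2)‖ ^ 2
          = ((κ ^ 2)⁻¹) ^ 2 * ‖z.1 - z.2‖ ^ 2 := by
        intro z
        rw [norm_smul, Real.norm_eq_abs, abs_of_pos (inv_pos.2 hκ2), mul_pow]
      simp only [e2]
      rw [integral_const_mul, integral_normsq_eq_toReal'
        (show AEStronglyMeasurable (fun a : Ed d × Ed d => a.1 - a.2) π from
          (continuous_fst.sub continuous_snd).aestronglyMeasurable)]
      rfl
    have hWb : W2 m μb ^ 2 = κ ^ 4 * ∫ z, ‖z.2.2‖ ^ 2 ∂β := by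
      rw [hC, hWb2]
      field_simp
    -- coupling between m and μ built from β
    have hρc : IsCoupling (β.map fun z : Ed d × Ed d × Ed d =>
        (z.1 + (κ ^ 2) • z.2.2, z.2.1)) m μ := by
      constructor
      · rw [Measure.map_map measurable_fst hTc.measurable]
        have h1 : (Prod.fst ∘ fun z : Ed d × Ed d × Ed d => (z.1 + (κ ^ 2) • z.2.2, z.2.1))
            = ((fun q : Ed d × Ed d => q.1 + (κ ^ 2) • q.2) ∘ fun z => (z.1, z.2.2)) := rfl
        have hqc : Continuous fun q : Ed d × Ed d => q.1 + (κ ^ 2) • q.2 := by fun_prop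
        rw [h1, ← Measure.map_map hqc.measurable hc13.measurable, hβ13, hγ,
          Measure.map_map hqc.measurable hχc.measurable]
        have h2 : ((fun q : Ed d × Ed d => q.1 + (κ ^ 2) • q.2)
            ∘ fun z : Ed d × Ed d => (z.2, (κ ^ 2)⁻¹ • (z.1 - z.2))) = Prod.fst := by
          funext z
          simp only [Function.comp_apply, smul_smul, mul_inv_cancel₀ hκ2.ne', one_smul]
          try abel
        rw [h2, hπm]
      · rw [Measure.map_map measurable_snd hTc.measurable]
        have h1 : (Prod.snd ∘ fun z : Ed d × Ed d × Ed d => (z.1 + (κ ^ 2) • z.2.2, z.2.1))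
            = (Prod.snd ∘ fun z : Ed d × Ed d × Ed d => (z.1, z.2.1)) := rfl
        rw [h1, ← Measure.map_map measurable_snd hc12.measurable, hβ12.2]
    -- finiteness of the cost of that coupling
    have hρfin : (∫⁻ z, (‖z.1 + (κ ^ 2) • z.2.2 - z.2.1‖₊ : ℝ≥0∞) ^ 2 ∂β) ≠ ⊤ := by
      have hbnd : ∀ z : Ed d × Ed d × Ed d,
          (‖z.1 + (κ ^ 2) • z.2.2 - z.2.1‖₊ : ℝ≥0∞) ^ 2
            ≤ ENNReal.ofReal 9 * (‖z‖₊ : ℝ≥0∞) ^ 2 := by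
        intro z
        have hκle : κ ^ 2 ≤ 1 := by nlinarith
        have hr : ‖z.1 + (κ ^ 2) • z.2.2 - z.2.1‖ ≤ 3 * ‖z‖ := by
          have h4 : ‖(κ ^ 2) • z.2.2‖ = κ ^ 2 * ‖z.2.2‖ := by
            rw [norm_smul, Real.norm_eq_abs, abs_of_pos hκ2]
          calc ‖z.1 + (κ ^ 2) • z.2.2 - z.2.1‖
              ≤ ‖z.1 + (κ ^ 2) • z.2.2‖ + ‖z.2.1‖ := norm_sub_le _ _
            _ ≤ ‖z.1‖ + ‖(κ ^ 2) • z.2.2‖ + ‖z.2.1‖ := by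
                linarith [norm_add_le z.1 ((κ ^ 2) • z.2.2)]
            _ ≤ 3 * ‖z‖ := by
                rw [h4]
                nlinarith [hz1 z, hz21 z, hz22 z, norm_nonneg z.2.2, norm_nonneg z]
        calc (‖z.1 + (κ ^ 2) • z.2.2 - z.2.1‖₊ : ℝ≥0∞) ^ 2
            = (ENNReal.ofReal ‖z.1 + (κ ^ 2) • z.2.2 - z.2.1‖) ^ 2 := by
              rw [ofReal_norm_eq_coe_nnnorm]
          _ ≤ (ENNReal.ofReal (3 * ‖z‖)) ^ 2 :=
              pow_le_pow_left' (ENNReal.ofReal_le_ofReal hr) 2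
          _ = (ENNReal.ofReal 3) ^ 2 * (‖z‖₊ : ℝ≥0∞) ^ 2 := by
              rw [ENNReal.ofReal_mul (by norm_num), ofReal_norm_eq_coe_nnnorm, mul_pow]
          _ = ENNReal.ofReal 9 * (‖z‖₊ : ℝ≥0∞) ^ 2 := by
              rw [← ENNReal.ofReal_pow (by norm_num)]
              norm_num
      have hle2 : (∫⁻ z, (‖z.1 + (κ ^ 2) • z.2.2 - z.2.1‖₊ : ℝ≥0∞) ^ 2 ∂β)
          ≤ ENNReal.ofReal 9 * ∫⁻ z, (‖z‖₊ : ℝ≥0∞) ^ 2 ∂β := by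
        rw [← lintegral_const_mul _ (measurable_nnnorm.coe_nnreal_ennreal.pow_const 2)]
        exact lintegral_mono hbnd
      exact (lt_of_le_of_lt hle2
        (ENNReal.mul_lt_top ENNReal.ofReal_lt_top hβ.2)).ne
    -- W₂(m,μ)² bounded by the cost of that coupling
    have hWμ : W2 m μ ^ 2 ≤ ∫ z, ‖z.1 + (κ ^ 2) • z.2.2 - z.2.1‖ ^ 2 ∂β := by
      have h1 : Wcost (β.map fun z : Ed d × Ed d × Ed d => (z.1 + (κ ^ 2) • z.2.2, z.2.1))
          = ∫⁻ z, (‖z.1 + (κ ^ 2) • z.2.2 - z.2.1‖₊ : ℝ≥0∞) ^ 2 ∂β := by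
        rw [Wcost, lintegral_map
          (show Measurable fun p : Ed d × Ed d => (‖p.1 - p.2‖₊ : ℝ≥0∞) ^ 2 from
            (continuous_fst.sub continuous_snd).measurable.nnnorm.coe_nnreal_ennreal.pow_const 2)
          hTc.measurable]
      have h0 : W2 m μ ^ 2 = (⨅ π' ∈ {π' : Measure (Ed d × Ed d) | IsCoupling π' m μ},
          Wcost π').toReal := by
        rw [W2, Real.sq_sqrt ENNReal.toReal_nonneg]
      rw [h0, integral_normsq_eq_toReal'
        ((by fun_prop : Continuous fun z : Ed d × Ed d × Ed d =>
          z.1 + (κ ^ 2) • z.2.2 - z.2.1).aestronglyMeasurable)]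
      refine ENNReal.toReal_mono hρfin ?_
      rw [← h1]
      exact iInf₂_le _ (show (β.map fun z : Ed d × Ed d × Ed d =>
        (z.1 + (κ ^ 2) • z.2.2, z.2.1)) ∈ {π' : Measure (Ed d × Ed d) | IsCoupling π' m μ}
        from hρc)
    -- pointwise algebraic identity and splitting of the integral
    have hpt : (fun z : Ed d × Ed d × Ed d => ‖z.1 + (κ ^ 2) • z.2.2 - z.2.1‖ ^ 2)
        = fun z => κ ^ 4 * ‖z.2.2‖ ^ 2 - 2 * κ ^ 2 * ⟪z.2.2, z.2.1 - z.1⟫_ℝ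
            + ‖z.2.1 - z.1‖ ^ 2 := by
      funext z
      have h0 : z.1 + (κ ^ 2) • z.2.2 - z.2.1 = (κ ^ 2) • z.2.2 - (z.2.1 - z.1) := by abel
      rw [h0, norm_sub_sq_real, real_inner_smul_left, norm_smul, Real.norm_eq_abs,
        abs_of_pos hκ2]
      ring
    have hsplit : ∫ z, ‖z.1 + (κ ^ 2) • z.2.2 - z.2.1‖ ^ 2 ∂β
        = κ ^ 4 * ∫ z, ‖z.2.2‖ ^ 2 ∂β
          - 2 * κ ^ 2 * ∫ z, ⟪z.2.2, z.2.1 - z.1⟫_ℝ ∂β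
          + ∫ z, ‖z.2.1 - z.1‖ ^ 2 ∂β := by
      have hint2 : Integrable (fun z : Ed d × Ed d × Ed d => κ ^ 4 * ‖z.2.2‖ ^ 2) β :=
        hintC.const_mul _
      have hint3 : Integrable
          (fun z : Ed d × Ed d × Ed d => 2 * κ ^ 2 * ⟪z.2.2, z.2.1 - z.1⟫_ℝ) β :=
        hintA.const_mul _
      have hint1 : Integrable (fun z : Ed d × Ed d × Ed d =>
          κ ^ 4 * ‖z.2.2‖ ^ 2 - 2 * κ ^ 2 * ⟪z.2.2, z.2.1 - z.1⟫_ℝ) β := hint2.sub hint3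
      rw [hpt, integral_add hint1 hintB, integral_sub hint2 hint3, integral_const_mul,
        integral_const_mul]
    -- conclude using the Ekeland inequality
    have hek2 := hek.2 μ
    have hσpos : (0 : ℝ) < 1 / (2 * κ ^ 2) := by positivity
    have hmain : (1 / (2 * κ ^ 2)) * W2 m μ ^ 2
        ≤ (1 / (2 * κ ^ 2)) * (κ ^ 4 * ∫ z, ‖z.2.2‖ ^ 2 ∂β
            - 2 * κ ^ 2 * ∫ z, ⟪z.2.2, z.2.1 - z.1⟫_ℝ ∂β
            + ∫ z, ‖z.2.1 - z.1‖ ^ 2 ∂β) := by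
      refine mul_le_mul_of_nonneg_left ?_ hσpos.le
      rw [← hsplit]; exact hWμ
    have hexp : (1 / (2 * κ ^ 2)) * (κ ^ 4 * ∫ z, ‖z.2.2‖ ^ 2 ∂β
            - 2 * κ ^ 2 * ∫ z, ⟪z.2.2, z.2.1 - z.1⟫_ℝ ∂β
            + ∫ z, ‖z.2.1 - z.1‖ ^ 2 ∂β)
        = (1 / (2 * κ ^ 2)) * (κ ^ 4 * ∫ z, ‖z.2.2‖ ^ 2 ∂β)
          - ∫ z, ⟪z.2.2, z.2.1 - z.1⟫_ℝ ∂β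
          + (1 / (2 * κ ^ 2)) * ∫ z, ‖z.2.1 - z.1‖ ^ 2 ∂β := by
      field_simp
      try ring
    have he : (1 / (2 * κ ^ 2)) * W2 m μb ^ 2
        = (1 / (2 * κ ^ 2)) * (κ ^ 4 * ∫ z, ‖z.2.2‖ ^ 2 ∂β) := by rw [hWb]
    linarith [hek2, hmain, hexp, he]
  refine ⟨⟨?_, 1 / (2 * κ ^ 2), by positivity, 1, one_pos, fun μ _ => key μ⟩, key⟩
  -- γ ∈ P₂
  constructor
  · rw [hγ]
    exact Measure.isProbabilityMeasure_map hχc.measurable.aemeasurable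
  · have hnsq2 : Measurable fun q : Ed d × Ed d => (‖q‖₊ : ℝ≥0∞) ^ 2 :=
      measurable_nnnorm.coe_nnreal_ennreal.pow_const 2
    rw [hγ, lintegral_map hnsq2 hχc.measurable]
    have hbnd : ∀ z : Ed d × Ed d,
        (‖((z.2, (κ ^ 2)⁻¹ • (z.1 - z.2)) : Ed d × Ed d)‖₊ : ℝ≥0∞) ^ 2
          ≤ 4 * ((‖z.2‖₊ : ℝ≥0∞) ^ 2
            + (‖(κ ^ 2)⁻¹‖₊ : ℝ≥0∞) ^ 2 * (‖z.1 - z.2‖₊ : ℝ≥0∞) ^ 2) := by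
      intro z
      have h1 : (‖((z.2, (κ ^ 2)⁻¹ • (z.1 - z.2)) : Ed d × Ed d)‖₊ : ℝ≥0∞)
          ≤ (‖z.2‖₊ : ℝ≥0∞) + (‖(κ ^ 2)⁻¹ • (z.1 - z.2)‖₊ : ℝ≥0∞) := by
        have hr : ‖((z.2, (κ ^ 2)⁻¹ • (z.1 - z.2)) : Ed d × Ed d)‖
            ≤ ‖z.2‖ + ‖(κ ^ 2)⁻¹ • (z.1 - z.2)‖ := by
          rw [Prod.norm_def]
          exact max_le (le_add_of_nonneg_right (norm_nonneg _))
            (le_add_of_nonneg_left (norm_nonneg _))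
        rw [← ofReal_norm_eq_coe_nnnorm, ← ofReal_norm_eq_coe_nnnorm,
          ← ofReal_norm_eq_coe_nnnorm, ← ENNReal.ofReal_add (norm_nonneg _) (norm_nonneg _)]
        exact ENNReal.ofReal_le_ofReal hr
      calc (‖((z.2, (κ ^ 2)⁻¹ • (z.1 - z.2)) : Ed d × Ed d)‖₊ : ℝ≥0∞) ^ 2
          ≤ ((‖z.2‖₊ : ℝ≥0∞) + (‖(κ ^ 2)⁻¹ • (z.1 - z.2)‖₊ : ℝ≥0∞)) ^ 2 :=
            pow_le_pow_left' h1 2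
        _ ≤ 4 * ((‖z.2‖₊ : ℝ≥0∞) ^ 2 + (‖(κ ^ 2)⁻¹ • (z.1 - z.2)‖₊ : ℝ≥0∞) ^ 2) :=
            ennreal_add_sq_le _ _
        _ = 4 * ((‖z.2‖₊ : ℝ≥0∞) ^ 2
            + (‖(κ ^ 2)⁻¹‖₊ : ℝ≥0∞) ^ 2 * (‖z.1 - z.2‖₊ : ℝ≥0∞) ^ 2) := by
          rw [nnnorm_smul]
          push_cast
          ring
    have hWc : (∫⁻ z : Ed d × Ed d, (‖z.1 - z.2‖₊ : ℝ≥0∞) ^ 2 ∂π) = Wcost π := rfl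
    calc ∫⁻ z : Ed d × Ed d, (‖((z.2, (κ ^ 2)⁻¹ • (z.1 - z.2)) : Ed d × Ed d)‖₊ : ℝ≥0∞) ^ 2 ∂π
        ≤ ∫⁻ z : Ed d × Ed d, 4 * ((‖z.2‖₊ : ℝ≥0∞) ^ 2
            + (‖(κ ^ 2)⁻¹‖₊ : ℝ≥0∞) ^ 2 * (‖z.1 - z.2‖₊ : ℝ≥0∞) ^ 2) ∂π :=
          lintegral_mono hbnd
      _ = 4 * ((∫⁻ z : Ed d × Ed d, (‖z.2‖₊ : ℝ≥0∞) ^ 2 ∂π)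
            + (‖(κ ^ 2)⁻¹‖₊ : ℝ≥0∞) ^ 2 * ∫⁻ z : Ed d × Ed d, (‖z.1 - z.2‖₊ : ℝ≥0∞) ^ 2 ∂π) := by
          have hm1 : Measurable fun z : Ed d × Ed d => (‖z.2‖₊ : ℝ≥0∞) ^ 2 :=
            measurable_snd.nnnorm.coe_nnreal_ennreal.pow_const 2
          have hm2 : Measurable fun z : Ed d × Ed d => (‖z.1 - z.2‖₊ : ℝ≥0∞) ^ 2 :=
            (continuous_fst.sub continuous_snd).measurable.nnnorm.coe_nnreal_ennreal.pow_const 2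
          rw [lintegral_const_mul' _ _ (by norm_num), lintegral_add_left hm1,
            lintegral_const_mul _ hm2]
      _ < ⊤ := by
          have h2 : ∫⁻ z : Ed d × Ed d, (‖z.2‖₊ : ℝ≥0∞) ^ 2 ∂π
              = ∫⁻ x, (‖x‖₊ : ℝ≥0∞) ^ 2 ∂μb.1 := by
            conv_rhs => rw [← hπμb]
            rw [lintegral_map hnsq measurable_snd]
          rw [h2, hWc]
          exact ENNReal.mul_lt_top (by norm_num)
            (ENNReal.add_lt_top.2 ⟨μb.2.2,
              ENNReal.mul_lt_top (ENNReal.pow_lt_top ENNReal.coe_lt_top) hWfin.lt_top⟩)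
end
end

section
/- Let m̂ ∈ P₂(ℝ^d), R > 0, φ ∈ UC_m̂, κ ∈ (0,1], ε > 0, m ∈ B_R(m̂), let μ̄ be an Ekeland point for (φ,κ,ε,m) and π ∈ Π_o(m,μ̄). Let b : ℝ^d → ℝ^d be Borel with ∫‖b‖²dm < ∞, τ > 0, and ν = (Id + τb)♯m. Then φ_κ(ν) ≤ φ_κ(m) + τ·∫((x−y)/κ²)·b(x) dπ(x,y) + (τ²/(2κ²))·∫‖b(x)‖²dm(x) + N_κ^ε(R,m). -/
open MeasureTheory Set Filter Topology
open scoped ENNReal NNReal InnerProductSpace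

noncomputable section

section Helpers

variable {d : ℕ}

instance : Nonempty (P2 d) := ⟨dirac0 d⟩

def Wd (μ ν : P2 d) : ℝ≥0∞ := ⨅ π ∈ {π : Measure (Ed d × Ed d) | IsCoupling π μ ν}, Wcost π

lemma W2_eq (μ ν : P2 d) : W2 μ ν = Real.sqrt (Wd μ ν).toReal := rfl

lemma P2.prob (μ : P2 d) : IsProbabilityMeasure μ.1 := μ.2.1
lemma P2.mom (μ : P2 d) : ∫⁻ x, (‖x‖₊ : ℝ≥0∞) ^ 2 ∂μ.1 < ⊤ := μ.2.2

lemma IsCoupling.prob {π : Measure (Ed d × Ed d)} {μ ν : P2 d} (h : IsCoupling π μ ν) :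
    IsProbabilityMeasure π := by
  constructor
  have : π.map Prod.fst Set.univ = π Set.univ := by
    rw [Measure.map_apply measurable_fst MeasurableSet.univ]; rfl
  rw [← this, h.1]; exact μ.prob.measure_univ

lemma lintegral_fst {π : Measure (Ed d × Ed d)} {μ ν : P2 d} (h : IsCoupling π μ ν)
    {f : Ed d → ℝ≥0∞} (hf : Measurable f) : ∫⁻ p, f p.1 ∂π = ∫⁻ x, f x ∂μ.1 := by
  rw [← h.1, lintegral_map hf measurable_fst]

lemma lintegral_snd {π : Measure (Ed d × Ed d)} {μ ν : P2 d} (h : IsCoupling π μ ν)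
    {f : Ed d → ℝ≥0∞} (hf : Measurable f) : ∫⁻ p, f p.2 ∂π = ∫⁻ x, f x ∂ν.1 := by
  rw [← h.2, lintegral_map hf measurable_snd]

lemma nnnorm_sq_add_le (a b : Ed d) :
    (‖a + b‖₊ : ℝ≥0∞) ^ 2 ≤ 2 * (‖a‖₊ : ℝ≥0∞) ^ 2 + 2 * (‖b‖₊ : ℝ≥0∞) ^ 2 := by
  have h : ‖a + b‖₊ ^ 2 ≤ 2 * ‖a‖₊ ^ 2 + 2 * ‖b‖₊ ^ 2 := by
    rw [← NNReal.coe_le_coe]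
    push_cast
    have := norm_add_le a b
    have h1 : (0:ℝ) ≤ ‖a‖ := norm_nonneg _
    have h2 : (0:ℝ) ≤ ‖b‖ := norm_nonneg _
    nlinarith [norm_nonneg (a+b), sq_nonneg (‖a‖ - ‖b‖), mul_le_mul this this (norm_nonneg (a+b)) (by positivity : (0:ℝ) ≤ ‖a‖ + ‖b‖)]
  calc (‖a + b‖₊ : ℝ≥0∞) ^ 2 = ((‖a + b‖₊ ^ 2 : ℝ≥0) : ℝ≥0∞) := by push_cast; ring
    _ ≤ ((2 * ‖a‖₊ ^ 2 + 2 * ‖b‖₊ ^ 2 : ℝ≥0) : ℝ≥0∞) := by exact_mod_cast ENNReal.coe_le_coe.mpr h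
    _ = 2 * (‖a‖₊ : ℝ≥0∞) ^ 2 + 2 * (‖b‖₊ : ℝ≥0∞) ^ 2 := by push_cast; ring

lemma isCoupling_prod (μ ν : P2 d) : IsCoupling (μ.1.prod ν.1) μ ν := by
  haveI := μ.prob; haveI := ν.prob
  constructor
  · rw [Measure.map_fst_prod]; simp
  · rw [Measure.map_snd_prod]; simp

lemma Wcost_lt_top_of_coupling {π : Measure (Ed d × Ed d)} {μ ν : P2 d}
    (h : IsCoupling π μ ν) : Wcost π < ⊤ := by
  have hle : Wcost π ≤ ∫⁻ p : Ed d × Ed d,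
      (2 * (‖p.1‖₊ : ℝ≥0∞) ^ 2 + 2 * (‖p.2‖₊ : ℝ≥0∞) ^ 2) ∂π := by
    refine lintegral_mono fun p => ?_
    have := nnnorm_sq_add_le p.1 (-p.2)
    simpa [sub_eq_add_neg] using this
  have hsplit : ∫⁻ p : Ed d × Ed d,
      (2 * (‖p.1‖₊ : ℝ≥0∞) ^ 2 + 2 * (‖p.2‖₊ : ℝ≥0∞) ^ 2) ∂π
      = 2 * (∫⁻ x, (‖x‖₊ : ℝ≥0∞) ^ 2 ∂μ.1) + 2 * (∫⁻ x, (‖x‖₊ : ℝ≥0∞) ^ 2 ∂ν.1) := by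
    rw [lintegral_add_left, lintegral_const_mul, lintegral_const_mul,
      lintegral_fst h (f := fun x => (‖x‖₊ : ℝ≥0∞) ^ 2), lintegral_snd h (f := fun x => (‖x‖₊ : ℝ≥0∞) ^ 2)]
    all_goals fun_prop
  refine lt_of_le_of_lt (hle.trans hsplit.le) ?_
  have := μ.mom; have := ν.mom
  finiteness

lemma Wd_le_of_coupling {π : Measure (Ed d × Ed d)} {μ ν : P2 d} (h : IsCoupling π μ ν) :
    Wd μ ν ≤ Wcost π := iInf₂_le π h

lemma Wd_lt_top (μ ν : P2 d) : Wd μ ν < ⊤ :=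
  lt_of_le_of_lt (Wd_le_of_coupling (isCoupling_prod μ ν)) (Wcost_lt_top_of_coupling (isCoupling_prod μ ν))

lemma W2_nonneg (μ ν : P2 d) : 0 ≤ W2 μ ν := Real.sqrt_nonneg _

lemma W2_sq (μ ν : P2 d) : W2 μ ν ^ 2 = (Wd μ ν).toReal := by
  rw [W2_eq, Real.sq_sqrt ENNReal.toReal_nonneg]

lemma W2_sq_le_of_coupling {π : Measure (Ed d × Ed d)} {μ ν : P2 d} (h : IsCoupling π μ ν) :
    W2 μ ν ^ 2 ≤ (Wcost π).toReal := by
  rw [W2_sq]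
  exact ENNReal.toReal_mono (Wcost_lt_top_of_coupling h).ne (Wd_le_of_coupling h)

lemma W2_le_of_coupling {π : Measure (Ed d × Ed d)} {μ ν : P2 d} (h : IsCoupling π μ ν)
    (hc : Wcost π ≠ ⊤) : W2 μ ν ≤ Real.sqrt (Wcost π).toReal := by
  rw [W2_eq]
  exact Real.sqrt_le_sqrt (ENNReal.toReal_mono hc (Wd_le_of_coupling h))

lemma measurable_nsq : Measurable fun x : Ed d => (‖x‖₊ : ℝ≥0∞) ^ 2 := by fun_prop

lemma isCoupling_swap {π : Measure (Ed d × Ed d)} {μ ν : P2 d} (h : IsCoupling π μ ν) :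
    IsCoupling (π.map Prod.swap) ν μ := by
  constructor
  · rw [Measure.map_map measurable_fst measurable_swap]; exact h.2
  · rw [Measure.map_map measurable_snd measurable_swap]; exact h.1

lemma Wcost_swap (π : Measure (Ed d × Ed d)) : Wcost (π.map Prod.swap) = Wcost π := by
  unfold Wcost
  rw [lintegral_map (by fun_prop) measurable_swap]
  refine lintegral_congr fun p => ?_
  have : p.swap.1 - p.swap.2 = -(p.1 - p.2) := by simp [Prod.swap]
  rw [this, nnnorm_neg]

lemma W2_symm (μ ν : P2 d) : W2 μ ν = W2 ν μ := by
  have key : ∀ a b : P2 d, Wd a b ≤ Wd b a := by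
    intro a b
    refine le_iInf₂ fun π hπ => ?_
    rw [← Wcost_swap π]
    exact Wd_le_of_coupling (isCoupling_swap hπ)
  rw [W2_eq, W2_eq, le_antisymm (key μ ν) (key ν μ)]

lemma isP2Meas_map {π : Measure (Ed d × Ed d)} [IsProbabilityMeasure π]
    {f : Ed d × Ed d → Ed d} (hf : Measurable f)
    (h : ∫⁻ p, (‖f p‖₊ : ℝ≥0∞) ^ 2 ∂π < ⊤) : IsP2Meas (π.map f) := by
  refine ⟨Measure.isProbabilityMeasure_map hf.aemeasurable, ?_⟩
  rwa [lintegral_map measurable_nsq hf]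

lemma isCoupling_map {π : Measure (Ed d × Ed d)} {μ ν μ' ν' : P2 d} (h : IsCoupling π μ ν)
    {f g : Ed d × Ed d → Ed d} (hf : Measurable f) (hg : Measurable g)
    (hf' : μ'.1 = π.map f) (hg' : ν'.1 = π.map g) :
    IsCoupling (π.map fun p => (f p, g p)) μ' ν' := by
  constructor
  · rw [Measure.map_map measurable_fst (hf.prodMk hg), hf']; rfl
  · rw [Measure.map_map measurable_snd (hf.prodMk hg), hg']; rfl

lemma Wcost_map {π : Measure (Ed d × Ed d)} {f g : Ed d × Ed d → Ed d}
    (hf : Measurable f) (hg : Measurable g) :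
    Wcost (π.map fun p => (f p, g p)) = ∫⁻ p, (‖f p - g p‖₊ : ℝ≥0∞) ^ 2 ∂π := by
  unfold Wcost
  rw [lintegral_map (by fun_prop) (hf.prodMk hg)]

lemma W2_le_map {π : Measure (Ed d × Ed d)} {μ ν μ' ν' : P2 d} (h : IsCoupling π μ ν)
    {f g : Ed d × Ed d → Ed d} (hf : Measurable f) (hg : Measurable g)
    (hf' : μ'.1 = π.map f) (hg' : ν'.1 = π.map g) :
    W2 μ' ν' ≤ Real.sqrt (∫⁻ p, (‖f p - g p‖₊ : ℝ≥0∞) ^ 2 ∂π).toReal := by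
  rw [← Wcost_map hf hg]
  refine W2_le_of_coupling (isCoupling_map h hf hg hf' hg') ?_
  exact (Wcost_lt_top_of_coupling (isCoupling_map h hf hg hf' hg')).ne

lemma exists_coupling_lt (μ ν : P2 d) {η : ℝ≥0∞} (hη : η ≠ 0) :
    ∃ π, IsCoupling π μ ν ∧ Wcost π < Wd μ ν + η := by
  have h : Wd μ ν < Wd μ ν + η := ENNReal.lt_add_right (Wd_lt_top μ ν).ne hη
  rw [Wd, iInf_lt_iff] at h
  obtain ⟨π, hπ⟩ := h
  rw [iInf_lt_iff] at hπ
  obtain ⟨hc, hlt⟩ := hπ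
  exact ⟨π, hc, hlt⟩

def interpMap (d : ℕ) (t : ℝ) : Ed d × Ed d → Ed d := fun p => (1 - t) • p.1 + t • p.2

lemma measurable_interpMap (t : ℝ) : Measurable (interpMap d t) := by
  unfold interpMap; fun_prop

lemma interp_isP2 {π : Measure (Ed d × Ed d)} {μ ν : P2 d} (h : IsCoupling π μ ν) (t : ℝ) :
    IsP2Meas (π.map (interpMap d t)) := by
  haveI := h.prob
  refine isP2Meas_map (measurable_interpMap t) ?_
  have hle : ∫⁻ p, (‖interpMap d t p‖₊ : ℝ≥0∞) ^ 2 ∂π ≤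
      ∫⁻ p : Ed d × Ed d, (2 * (‖(1-t) • p.1‖₊ : ℝ≥0∞) ^ 2 + 2 * (‖t • p.2‖₊ : ℝ≥0∞) ^ 2) ∂π :=
    lintegral_mono fun p => nnnorm_sq_add_le _ _
  refine lt_of_le_of_lt hle ?_
  rw [lintegral_add_left (by fun_prop), lintegral_const_mul _ (by fun_prop),
    lintegral_const_mul _ (by fun_prop)]
  have h1 : ∫⁻ p : Ed d × Ed d, (‖(1-t) • p.1‖₊ : ℝ≥0∞) ^ 2 ∂π < ⊤ := by
    calc ∫⁻ p : Ed d × Ed d, (‖(1-t) • p.1‖₊ : ℝ≥0∞) ^ 2 ∂π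
        = ∫⁻ p : Ed d × Ed d, (‖(1:ℝ)-t‖₊ : ℝ≥0∞)^2 * (‖p.1‖₊ : ℝ≥0∞) ^ 2 ∂π := by
          refine lintegral_congr fun p => ?_
          rw [nnnorm_smul]; push_cast; ring
      _ = (‖(1:ℝ)-t‖₊ : ℝ≥0∞)^2 * ∫⁻ p : Ed d × Ed d, (‖p.1‖₊ : ℝ≥0∞) ^ 2 ∂π :=
          lintegral_const_mul _ (by fun_prop)
      _ = (‖(1:ℝ)-t‖₊ : ℝ≥0∞)^2 * ∫⁻ x, (‖x‖₊ : ℝ≥0∞) ^ 2 ∂μ.1 := by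
          rw [lintegral_fst h (f := fun x => (‖x‖₊ : ℝ≥0∞) ^ 2) measurable_nsq]
      _ < ⊤ := ENNReal.mul_lt_top (ENNReal.pow_ne_top ENNReal.coe_ne_top).lt_top μ.mom
  have h2 : ∫⁻ p : Ed d × Ed d, (‖t • p.2‖₊ : ℝ≥0∞) ^ 2 ∂π < ⊤ := by
    calc ∫⁻ p : Ed d × Ed d, (‖t • p.2‖₊ : ℝ≥0∞) ^ 2 ∂π
        = ∫⁻ p : Ed d × Ed d, (‖t‖₊ : ℝ≥0∞)^2 * (‖p.2‖₊ : ℝ≥0∞) ^ 2 ∂π := by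
          refine lintegral_congr fun p => ?_
          rw [nnnorm_smul]; push_cast; ring
      _ = (‖t‖₊ : ℝ≥0∞)^2 * ∫⁻ p : Ed d × Ed d, (‖p.2‖₊ : ℝ≥0∞) ^ 2 ∂π :=
          lintegral_const_mul _ (by fun_prop)
      _ = (‖t‖₊ : ℝ≥0∞)^2 * ∫⁻ x, (‖x‖₊ : ℝ≥0∞) ^ 2 ∂ν.1 := by
          rw [lintegral_snd h (f := fun x => (‖x‖₊ : ℝ≥0∞) ^ 2) measurable_nsq]
      _ < ⊤ := ENNReal.mul_lt_top (ENNReal.pow_ne_top ENNReal.coe_ne_top).lt_top ν.mom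
  finiteness

lemma W2_le_smul_of_coupling {π : Measure (Ed d × Ed d)} {μ ν μ' ν' : P2 d}
    (h : IsCoupling π μ ν) {f g : Ed d × Ed d → Ed d} (hf : Measurable f) (hg : Measurable g)
    (hf' : μ'.1 = π.map f) (hg' : ν'.1 = π.map g) {r : ℝ}
    (hr : ∀ p : Ed d × Ed d, f p - g p = r • (p.1 - p.2)) :
    W2 μ' ν' ≤ |r| * Real.sqrt (Wcost π).toReal := by
  refine le_trans (W2_le_map h hf hg hf' hg') ?_
  have hcost : ∫⁻ p, (‖f p - g p‖₊ : ℝ≥0∞) ^ 2 ∂π = (‖r‖₊ : ℝ≥0∞)^2 * Wcost π := by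
    unfold Wcost
    rw [← lintegral_const_mul _ (by fun_prop : Measurable fun p : Ed d × Ed d => (‖p.1-p.2‖₊ : ℝ≥0∞)^2)]
    refine lintegral_congr fun p => ?_
    rw [hr p, nnnorm_smul]; push_cast; ring
  rw [hcost, ENNReal.toReal_mul, Real.sqrt_mul (by positivity)]
  have : ((‖r‖₊ : ℝ≥0∞)^2).toReal = |r|^2 := by
    simp [ENNReal.toReal_pow, Real.norm_eq_abs]
  rw [this, Real.sqrt_sq (abs_nonneg r)]


lemma phi_bddAbove_ball {mhat : P2 d} {φ : P2 d → ℝ} (hφ : UCmem mhat φ) {R : ℝ} (hR : 0 < R) :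
    ∃ C : ℝ, ∀ μ ∈ ballW mhat R, φ μ ≤ C := by
  obtain ⟨δ, hδ, huc⟩ := hφ.unif_cont (R + 1) (by linarith) 1 one_pos
  refine ⟨(⌈(R+1)/δ⌉₊ + 1 : ℕ), fun μ hμ => ?_⟩
  -- choose a near-optimal coupling
  obtain ⟨π, hπ, hcost⟩ := exists_coupling_lt mhat μ
    (η := ENNReal.ofReal (2*R+1)) (ENNReal.ofReal_pos.mpr (by linarith)).ne'
  haveI := hπ.prob
  set c := Real.sqrt (Wcost π).toReal with hc
  have hcfin : Wcost π ≠ ⊤ := (Wcost_lt_top_of_coupling hπ).ne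
  have hcR : c ≤ R + 1 := by
    have h1 : (Wcost π).toReal ≤ (Wd mhat μ).toReal + (2*R+1) := by
      have := ENNReal.toReal_mono (ENNReal.add_ne_top.mpr ⟨(Wd_lt_top mhat μ).ne, ENNReal.ofReal_ne_top⟩) hcost.le
      rwa [ENNReal.toReal_add (Wd_lt_top mhat μ).ne (by finiteness),
        ENNReal.toReal_ofReal (by linarith)] at this
    have h2 : (Wd mhat μ).toReal ≤ R^2 := by
      rw [← W2_sq]
      have := W2_nonneg mhat μ
      have hμ' : W2 mhat μ ≤ R := hμ
      nlinarith [hμ']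
    have : (Wcost π).toReal ≤ (R+1)^2 := by nlinarith
    calc c ≤ Real.sqrt ((R+1)^2) := Real.sqrt_le_sqrt this
      _ = R + 1 := Real.sqrt_sq (by linarith)
  -- the interpolation curve
  set mt : ℝ → P2 d := fun t => ⟨π.map (interpMap d t), interp_isP2 hπ t⟩ with hmt
  have hmap : ∀ s t : ℝ, W2 (mt s) (mt t) ≤ |t - s| * c := by
    intro s t
    refine W2_le_smul_of_coupling hπ (measurable_interpMap s) (measurable_interpMap t)
      rfl rfl (r := t - s) fun p => ?_
    unfold interpMap
    module
  have h0 : mt 0 = mhat := by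
    refine Subtype.ext ?_
    show π.map (interpMap d 0) = mhat.1
    have : interpMap d 0 = Prod.fst := by funext p; simp [interpMap]
    rw [this, hπ.1]
  have h1 : mt 1 = μ := by
    refine Subtype.ext ?_
    show π.map (interpMap d 1) = μ.1
    have : interpMap d 1 = Prod.snd := by funext p; simp [interpMap]
    rw [this, hπ.2]
  have hball : ∀ t : ℝ, 0 ≤ t → t ≤ 1 → W2 mhat (mt t) ≤ R + 1 := by
    intro t ht ht1
    have := hmap 0 t
    rw [h0] at this
    refine this.trans ?_
    rw [sub_zero, abs_of_nonneg ht]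
    nlinarith [(Real.sqrt_nonneg (Wcost π).toReal : (0:ℝ) ≤ c)]
  set N : ℕ := ⌈c / δ⌉₊ + 1 with hN
  have hNpos : (0:ℝ) < N := by positivity
  have hstep : c / N ≤ δ := by
    rw [div_le_iff₀ hNpos]
    have h3 : c / δ ≤ (N : ℝ) := by
      calc c / δ ≤ (⌈c / δ⌉₊ : ℝ) := Nat.le_ceil _
        _ ≤ N := by exact_mod_cast Nat.le_succ _
    calc c = (c / δ) * δ := by field_simp
      _ ≤ N * δ := by nlinarith
      _ = δ * N := by ring
  have key : ∀ k : ℕ, k ≤ N → φ (mt (k / N)) ≤ k := by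
    intro k hk
    induction k with
    | zero => simp only [Nat.cast_zero, zero_div, h0, hφ.zero_at]; norm_num
    | succ n ih =>
      have hn : n ≤ N := le_of_lt (Nat.lt_of_succ_le hk)
      have hih := ih hn
      have hb1 : W2 mhat (mt (n / N)) ≤ R + 1 := by
        refine hball _ (by positivity) ?_
        rw [div_le_one hNpos]; exact_mod_cast hn
      have hb2 : W2 mhat (mt ((n+1 : ℕ) / N)) ≤ R + 1 := by
        refine hball _ (by positivity) ?_
        rw [div_le_one hNpos]; exact_mod_cast hk
      have hw : W2 (mt (n / N)) (mt ((n+1 : ℕ) / N)) ≤ δ := by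
        refine (hmap _ _).trans ?_
        have : |(((n:ℕ)+1 : ℕ) : ℝ) / N - (n : ℝ) / N| = 1 / N := by
          push_cast
          rw [div_sub_div_same]
          ring_nf
          rw [abs_of_nonneg (by positivity)]
        rw [this]
        calc 1 / (N:ℝ) * c = c / N := by ring
          _ ≤ δ := hstep
      have := huc _ _ hb1 hb2 hw
      have habs := abs_le.mp this
      have hcast : ((n+1:ℕ):ℝ) = (n:ℝ)+1 := by push_cast; ring
      have hfin : φ (mt ((↑(n+1):ℝ) / ↑N)) ≤ (n:ℝ) + 1 := by linarith [habs.1]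
      exact le_trans hfin (le_of_eq hcast.symm)
  have := key N le_rfl
  rw [div_self hNpos.ne', h1] at this
  refine this.trans ?_
  have : N ≤ ⌈(R+1)/δ⌉₊ + 1 := by
    have : ⌈c/δ⌉₊ ≤ ⌈(R+1)/δ⌉₊ := Nat.ceil_le_ceil (by gcongr)
    omega
  exact_mod_cast this

lemma sqrt_add_le' {x y : ℝ} (hx : 0 ≤ x) (hy : 0 ≤ y) :
    Real.sqrt (x + y) ≤ Real.sqrt x + Real.sqrt y := by
  nlinarith [Real.sq_sqrt hx, Real.sq_sqrt hy, Real.sqrt_nonneg x, Real.sqrt_nonneg y,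
    Real.sqrt_nonneg (x+y), Real.sq_sqrt (by linarith : (0:ℝ) ≤ x+y)]

open ProbabilityTheory in
lemma map_compProd_prod_fst {α β γ : Type*} [MeasurableSpace α] [MeasurableSpace β]
    [MeasurableSpace γ] (μ : Measure α) [SFinite μ] (κ : Kernel α β) (η : Kernel α γ)
    [IsMarkovKernel κ] [IsMarkovKernel η] :
    (μ ⊗ₘ (κ ×ₖ η)).map (fun p => (p.1, p.2.1)) = μ ⊗ₘ κ := by
  ext s hs
  rw [Measure.map_apply (by fun_prop) hs,
    Measure.compProd_apply (hs.preimage (by fun_prop)), Measure.compProd_apply hs]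
  refine lintegral_congr fun a => ?_
  have hset : Prod.mk a ⁻¹' ((fun p : α × β × γ => (p.1, p.2.1)) ⁻¹' s)
      = (Prod.mk a ⁻¹' s) ×ˢ univ := by ext q; simp
  rw [hset, Kernel.prod_apply, Measure.prod_prod, measure_univ, mul_one]

open ProbabilityTheory in
lemma map_compProd_prod_snd {α β γ : Type*} [MeasurableSpace α] [MeasurableSpace β]
    [MeasurableSpace γ] (μ : Measure α) [SFinite μ] (κ : Kernel α β) (η : Kernel α γ)
    [IsMarkovKernel κ] [IsMarkovKernel η] :
    (μ ⊗ₘ (κ ×ₖ η)).map (fun p => (p.1, p.2.2)) = μ ⊗ₘ η := by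
  ext s hs
  rw [Measure.map_apply (by fun_prop) hs,
    Measure.compProd_apply (hs.preimage (by fun_prop)), Measure.compProd_apply hs]
  refine lintegral_congr fun a => ?_
  have hset : Prod.mk a ⁻¹' ((fun p : α × β × γ => (p.1, p.2.2)) ⁻¹' s)
      = univ ×ˢ (Prod.mk a ⁻¹' s) := by ext q; simp
  rw [hset, Kernel.prod_apply, Measure.prod_prod, measure_univ, one_mul]

lemma lint_sq_eq_eLpNorm {α : Type*} [MeasurableSpace α] (m : Measure α)
    (f : α → Ed d) : ∫⁻ p, (‖f p‖₊ : ℝ≥0∞) ^ 2 ∂m = (eLpNorm f 2 m) ^ 2 := by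
  rw [eLpNorm_eq_lintegral_rpow_enorm_toReal (two_ne_zero) (ENNReal.ofNat_ne_top)]
  simp only [enorm_eq_nnnorm]
  have h2 : ((2:ℝ≥0∞)).toReal = (2:ℝ) := by simp
  rw [h2, ← ENNReal.rpow_natCast _ 2, ← ENNReal.rpow_mul]
  norm_num

open ProbabilityTheory in
lemma W2_triangle (μ ν ρ : P2 d) : W2 μ ρ ≤ W2 μ ν + W2 ν ρ := by
  refine le_of_forall_pos_le_add fun ε hε => ?_
  set η : ℝ := (ε/2)^2 with hηdef
  have hη0 : 0 < η := by positivity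
  obtain ⟨π₁, hπ₁, hc₁⟩ := exists_coupling_lt ν μ (η := ENNReal.ofReal η)
    (ENNReal.ofReal_pos.mpr hη0).ne'
  obtain ⟨π₂, hπ₂, hc₂⟩ := exists_coupling_lt ν ρ (η := ENNReal.ofReal η)
    (ENNReal.ofReal_pos.mpr hη0).ne'
  haveI := hπ₁.prob
  haveI := hπ₂.prob
  haveI := ν.prob
  have hfst₁ : π₁.fst = ν.1 := by rw [Measure.fst, hπ₁.1]
  have hfst₂ : π₂.fst = ν.1 := by rw [Measure.fst, hπ₂.1]
  set β := ν.1 ⊗ₘ (π₁.condKernel ×ₖ π₂.condKernel) with hβ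
  have hβ₁ : β.map (fun p => (p.1, p.2.1)) = π₁ := by
    rw [hβ, map_compProd_prod_fst, ← hfst₁, π₁.disintegrate]
  have hβ₂ : β.map (fun p => (p.1, p.2.2)) = π₂ := by
    rw [hβ, map_compProd_prod_snd, ← hfst₂, π₂.disintegrate]
  set γm := β.map (fun p => (p.2.1, p.2.2)) with hγ
  have hγc : IsCoupling γm μ ρ := by
    constructor
    · rw [hγ, Measure.map_map measurable_fst (by fun_prop)]
      have he : (Prod.fst ∘ fun p : Ed d × Ed d × Ed d => (p.2.1, p.2.2))
          = (Prod.snd ∘ fun p : Ed d × Ed d × Ed d => (p.1, p.2.1)) := rfl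
      rw [he, ← Measure.map_map measurable_snd (by fun_prop), hβ₁, hπ₁.2]
    · rw [hγ, Measure.map_map measurable_snd (by fun_prop)]
      have he : (Prod.snd ∘ fun p : Ed d × Ed d × Ed d => (p.2.1, p.2.2))
          = (Prod.snd ∘ fun p : Ed d × Ed d × Ed d => (p.1, p.2.2)) := rfl
      rw [he, ← Measure.map_map measurable_snd (by fun_prop), hβ₂, hπ₂.2]
  set F : Ed d × Ed d × Ed d → Ed d := fun p => p.2.1 - p.1 with hF
  set G : Ed d × Ed d × Ed d → Ed d := fun p => p.1 - p.2.2 with hG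
  set a := eLpNorm F 2 β with ha
  set b := eLpNorm G 2 β with hb
  have ha2 : a ^ 2 = Wcost π₁ := by
    rw [ha, ← lint_sq_eq_eLpNorm, ← hβ₁]
    unfold Wcost
    rw [lintegral_map (by fun_prop) (by fun_prop)]
    refine lintegral_congr fun p => ?_
    have : p.1 - p.2.1 = -(F p) := by rw [hF]; simp
    rw [this, nnnorm_neg]
  have hb2 : b ^ 2 = Wcost π₂ := by
    rw [hb, ← lint_sq_eq_eLpNorm, ← hβ₂]
    unfold Wcost
    rw [lintegral_map (by fun_prop) (by fun_prop)]
  have haT : a ≠ ⊤ := by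
    intro h
    apply (Wcost_lt_top_of_coupling hπ₁).ne
    rw [← ha2, h]
    simp
  have hbT : b ≠ ⊤ := by
    intro h
    apply (Wcost_lt_top_of_coupling hπ₂).ne
    rw [← hb2, h]
    simp
  have hmink : Wcost γm ≤ (a + b) ^ 2 := by
    have hWγ : Wcost γm = ∫⁻ p, (‖F p + G p‖₊ : ℝ≥0∞) ^ 2 ∂β := by
      unfold Wcost
      rw [hγ, lintegral_map (by fun_prop) (by fun_prop)]
      refine lintegral_congr fun p => ?_
      have : F p + G p = p.2.1 - p.2.2 := by
        show p.2.1 - p.1 + (p.1 - p.2.2) = _; exact sub_add_sub_cancel _ _ _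
      rw [this]
    rw [hWγ]
    simp only [← Pi.add_apply F G]
    rw [lint_sq_eq_eLpNorm]
    have := eLpNorm_add_le (μ := β) (p := 2)
      ((by fun_prop : Measurable F).aestronglyMeasurable)
      ((by fun_prop : Measurable G).aestronglyMeasurable) (by norm_num : (1:ℝ≥0∞) ≤ 2)
    gcongr
  have habfin : a + b ≠ ⊤ := ENNReal.add_ne_top.mpr ⟨haT, hbT⟩
  have h1 : W2 μ ρ ≤ (a + b).toReal := by
    rw [W2_eq]
    have hle : Wd μ ρ ≤ (a + b) ^ 2 := le_trans (Wd_le_of_coupling hγc) hmink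
    calc Real.sqrt (Wd μ ρ).toReal
        ≤ Real.sqrt (((a+b)^2).toReal) :=
          Real.sqrt_le_sqrt (ENNReal.toReal_mono (ENNReal.pow_ne_top habfin) hle)
      _ = (a + b).toReal := by rw [ENNReal.toReal_pow, Real.sqrt_sq ENNReal.toReal_nonneg]
  have key : ∀ (x : ℝ≥0∞) (σ1 σ2 : P2 d), x ^ 2 = Wcost π₁ → Wcost π₁ < Wd σ1 σ2 + ENNReal.ofReal η →
      x.toReal ≤ W2 σ1 σ2 + ε/2 := by
    intro x σ1 σ2 hx2 hcost
    have hxT : x ≠ ⊤ := by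
      intro h; apply (Wcost_lt_top_of_coupling hπ₁).ne; rw [← hx2, h]; simp
    have h2 : (x^2).toReal ≤ (Wd σ1 σ2).toReal + η := by
      have := ENNReal.toReal_mono
        (ENNReal.add_ne_top.mpr ⟨(Wd_lt_top σ1 σ2).ne, ENNReal.ofReal_ne_top⟩)
        (hx2 ▸ hcost.le)
      rwa [ENNReal.toReal_add (Wd_lt_top σ1 σ2).ne ENNReal.ofReal_ne_top,
        ENNReal.toReal_ofReal hη0.le] at this
    have hxr : x.toReal = Real.sqrt ((x^2).toReal) := by
      rw [ENNReal.toReal_pow, Real.sqrt_sq ENNReal.toReal_nonneg]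
    rw [hxr]
    calc Real.sqrt ((x^2).toReal) ≤ Real.sqrt ((Wd σ1 σ2).toReal + η) := Real.sqrt_le_sqrt h2
      _ ≤ Real.sqrt (Wd σ1 σ2).toReal + Real.sqrt η := sqrt_add_le' ENNReal.toReal_nonneg hη0.le
      _ = W2 σ1 σ2 + ε/2 := by
          rw [← W2_eq, hηdef, Real.sqrt_sq (by linarith)]
  have hA : a.toReal ≤ W2 ν μ + ε/2 := key a ν μ ha2 hc₁
  have hB : b.toReal ≤ W2 ν ρ + ε/2 := by
    refine (?_ : b.toReal ≤ _)
    have hxT : b ≠ ⊤ := hbT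
    have h2 : (b^2).toReal ≤ (Wd ν ρ).toReal + η := by
      have := ENNReal.toReal_mono
        (ENNReal.add_ne_top.mpr ⟨(Wd_lt_top ν ρ).ne, ENNReal.ofReal_ne_top⟩)
        (hb2 ▸ hc₂.le)
      rwa [ENNReal.toReal_add (Wd_lt_top ν ρ).ne ENNReal.ofReal_ne_top,
        ENNReal.toReal_ofReal hη0.le] at this
    have hxr : b.toReal = Real.sqrt ((b^2).toReal) := by
      rw [ENNReal.toReal_pow, Real.sqrt_sq ENNReal.toReal_nonneg]
    rw [hxr]
    calc Real.sqrt ((b^2).toReal) ≤ Real.sqrt ((Wd ν ρ).toReal + η) := Real.sqrt_le_sqrt h2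
      _ ≤ Real.sqrt (Wd ν ρ).toReal + Real.sqrt η := sqrt_add_le' ENNReal.toReal_nonneg hη0.le
      _ = W2 ν ρ + ε/2 := by
          rw [← W2_eq, hηdef, Real.sqrt_sq (by linarith)]
  have := ENNReal.toReal_add haT hbT
  rw [W2_symm ν μ] at hA
  linarith [h1, hA, hB, this ▸ h1]

section InfConv

variable {φ : P2 d → ℝ} {κ : ℝ} {m : P2 d}

lemma infConv_bddBelow (hφ : ∀ μ, 0 ≤ φ μ) (hκ : 0 < κ) :
    BddBelow (Set.range fun μ : P2 d => φ μ + 1 / (2 * κ ^ 2) * W2 m μ ^ 2) := by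
  refine ⟨0, ?_⟩
  rintro x ⟨μ, rfl⟩
  have := hφ μ
  have := sq_nonneg (W2 m μ)
  positivity

lemma infConv_nonneg (hφ : ∀ μ, 0 ≤ φ μ) (hκ : 0 < κ) : 0 ≤ infConv φ κ m := by
  refine le_ciInf fun μ => ?_
  have := hφ μ
  have := sq_nonneg (W2 m μ)
  positivity

lemma infConv_le (hφ : ∀ μ, 0 ≤ φ μ) (hκ : 0 < κ) (μ : P2 d) :
    infConv φ κ m ≤ φ μ + 1 / (2 * κ ^ 2) * W2 m μ ^ 2 :=
  ciInf_le (infConv_bddBelow hφ hκ) μ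

lemma infConv_exists_lt (hφ : ∀ μ, 0 ≤ φ μ) (hκ : 0 < κ) {η : ℝ} (hη : 0 < η) :
    ∃ μ : P2 d, φ μ + 1 / (2 * κ ^ 2) * W2 m μ ^ 2 < infConv φ κ m + η :=
  exists_lt_of_ciInf_lt (lt_add_of_pos_right _ hη)

end InfConv

lemma phi_le_Sfun {mhat : P2 d} {φ : P2 d → ℝ} (hφ : UCmem mhat φ) {R : ℝ} (hR : 0 < R)
    {m : P2 d} (hm : m ∈ ballW mhat R) : φ m ≤ Sfun mhat φ R := by
  obtain ⟨C, hC⟩ := phi_bddAbove_ball hφ hR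
  refine le_csSup ⟨C, ?_⟩ (Set.mem_image_of_mem φ hm)
  rintro x ⟨μ, hμ, rfl⟩
  exact hC μ hμ

lemma W2_le_Mke {mhat : P2 d} {φ : P2 d → ℝ} (hφ : UCmem mhat φ) {R κ ε : ℝ} (hR : 0 < R)
    (hκ : 0 < κ) (hε : 0 < ε) {m μb : P2 d} (hm : m ∈ ballW mhat R)
    (hek : EkelandPt φ κ ε m μb) : W2 m μb ≤ Mke mhat φ κ ε R := by
  set W := W2 m μb with hW
  have hW0 : 0 ≤ W := W2_nonneg m μb
  have hκ2 : (0:ℝ) < κ ^ 2 := by positivity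
  have hSm : φ m ≤ Sfun mhat φ R := phi_le_Sfun hφ hR hm
  have hIneq : 1 / (2 * κ ^ 2) * W ^ 2 + ε * W ≤ φ m := by
    have h1 := hek.1
    have h2 := hφ.nonneg μb
    rw [W2_symm μb m] at h1
    linarith
  have hS0 : 0 ≤ Sfun mhat φ R := by
    have : (0:ℝ) ≤ 1 / (2 * κ ^ 2) * W ^ 2 + ε * W := by positivity
    linarith
  have h' : W ^ 2 + 2 * κ ^ 2 * ε * W ≤ 2 * κ ^ 2 * Sfun mhat φ R := by
    have h2 := mul_le_mul_of_nonneg_left (hIneq.trans hSm) (by positivity : (0:ℝ) ≤ 2 * κ ^ 2)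
    have h3 : 2 * κ ^ 2 * (1 / (2 * κ ^ 2) * W ^ 2 + ε * W)
        = W ^ 2 + 2 * κ ^ 2 * ε * W := by field_simp
    linarith [h3 ▸ h2]
  have hkey : (W + ε * κ ^ 2) ^ 2 ≤ κ ^ 2 * (2 * Sfun mhat φ R + ε ^ 2 * κ ^ 2) := by nlinarith
  have h4 := Real.sqrt_le_sqrt hkey
  rw [Real.sqrt_sq (by positivity), Real.sqrt_mul (sq_nonneg κ), Real.sqrt_sq hκ.le] at h4
  rw [Mke]
  linarith

lemma ek_le_infConv_add {mhat : P2 d} {φ : P2 d → ℝ} (hφ : UCmem mhat φ) {R κ ε : ℝ}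
    (hR : 0 < R) (hκ : 0 < κ) (hε : 0 < ε) {m μb : P2 d} (hm : m ∈ ballW mhat R)
    (hek : EkelandPt φ κ ε m μb) :
    φ μb + 1 / (2 * κ ^ 2) * W2 m μb ^ 2 ≤ infConv φ κ m + Nke mhat φ κ ε R m := by
  set I := infConv φ κ m with hI
  have hI0 : 0 ≤ I := infConv_nonneg hφ.nonneg hκ
  have hκ2 : (0:ℝ) < κ ^ 2 := by positivity
  refine le_of_forall_pos_le_add fun ϑ hϑ => ?_
  set η : ℝ := min (ϑ/2) ((ϑ / (2 * (ε * κ + 1))) ^ 2 / 2) with hηdef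
  have hεκ : (0:ℝ) < ε * κ + 1 := by positivity
  have hη0 : 0 < η := by
    apply lt_min (by linarith)
    positivity
  obtain ⟨μ, hμ⟩ := infConv_exists_lt (m := m) hφ.nonneg hκ hη0
  have hWm : W2 m μ ≤ κ * Real.sqrt (2 * (I + η)) := by
    have h1 : 1 / (2 * κ ^ 2) * W2 m μ ^ 2 ≤ I + η := by
      have := hφ.nonneg μ
      linarith
    have h2 : W2 m μ ^ 2 ≤ κ ^ 2 * (2 * (I + η)) := by
      have h3 := mul_le_mul_of_nonneg_left h1 (by positivity : (0:ℝ) ≤ 2 * κ ^ 2)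
      have h4 : 2 * κ ^ 2 * (1 / (2 * κ ^ 2) * W2 m μ ^ 2) = W2 m μ ^ 2 := by
        field_simp
      nlinarith
    have h5 := Real.sqrt_le_sqrt h2
    rw [Real.sqrt_sq (W2_nonneg m μ), Real.sqrt_mul (sq_nonneg κ), Real.sqrt_sq hκ.le] at h5
    exact h5
  have hsq : Real.sqrt (2 * (I + η)) ≤ Real.sqrt (2 * I) + Real.sqrt (2 * η) := by
    have : (2:ℝ) * (I + η) = 2 * I + 2 * η := by ring
    rw [this]
    exact sqrt_add_le' (by linarith) (by linarith)
  have htri : W2 μb μ ≤ Mke mhat φ κ ε R + W2 m μ := by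
    calc W2 μb μ ≤ W2 μb m + W2 m μ := W2_triangle μb m μ
      _ ≤ Mke mhat φ κ ε R + W2 m μ := by
          rw [W2_symm μb m]
          have := W2_le_Mke hφ hR hκ hε hm hek
          linarith
  have hch : Real.sqrt (2 * η) ≤ ϑ / (2 * (ε * κ + 1)) := by
    have h1 : 2 * η ≤ (ϑ / (2 * (ε * κ + 1))) ^ 2 := by
      have := min_le_right (ϑ/2) ((ϑ / (2 * (ε * κ + 1))) ^ 2 / 2)
      rw [← hηdef] at this
      linarith
    have h2 := Real.sqrt_le_sqrt h1
    rwa [Real.sqrt_sq (by positivity)] at h2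
  have hfin := hek.2 μ
  have hεη : ε * (κ * Real.sqrt (2 * η)) ≤ ϑ / 2 := by
    have h1 : ε * κ * Real.sqrt (2*η) ≤ ε * κ * (ϑ / (2 * (ε * κ + 1))) := by
      have : (0:ℝ) ≤ ε * κ := by positivity
      exact mul_le_mul_of_nonneg_left hch this
    have h2 : ε * κ * (ϑ / (2 * (ε * κ + 1))) ≤ ϑ / 2 := by
      rw [mul_div_assoc', div_le_div_iff₀ (by positivity) (by norm_num : (0:ℝ) < 2)]
      nlinarith
    nlinarith
  have hηϑ : η ≤ ϑ / 2 := by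
    have := min_le_left (ϑ/2) ((ϑ / (2 * (ε * κ + 1))) ^ 2 / 2)
    rw [← hηdef] at this
    linarith
  -- assemble
  have hW2 : ε * W2 μb μ ≤ ε * Mke mhat φ κ ε R + ε * κ * Real.sqrt (2*I)
      + ε * (κ * Real.sqrt (2*η)) := by
    have h6 : W2 μb μ ≤ Mke mhat φ κ ε R + κ * Real.sqrt (2*I) + κ * Real.sqrt (2*η) := by
      have h7 : W2 m μ ≤ κ * (Real.sqrt (2*I) + Real.sqrt (2*η)) :=
        hWm.trans (mul_le_mul_of_nonneg_left hsq hκ.le)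
      nlinarith
    nlinarith
  rw [Nke, ← hI]
  linarith


end Helpers

/-- a Taylor-type expansion for the inf-convolution. -/
theorem statement9 {d : ℕ} (mhat : P2 d) (R : ℝ) (hR : 0 < R)
    (φ : P2 d → ℝ) (hφ : UCmem mhat φ) (κ ε : ℝ) (hκ : κ ∈ Ioc (0 : ℝ) 1) (hε : 0 < ε)
    (m : P2 d) (hm : W2 mhat m ≤ R) (μb : P2 d) (hek : EkelandPt φ κ ε m μb)
    (π : Measure (Ed d × Ed d)) (hπ : IsOptPlan π m μb)
    (b : Ed d → Ed d) (hb : Measurable b)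
    (hb2 : ∫⁻ x, (‖b x‖₊ : ℝ≥0∞) ^ 2 ∂m.1 < ⊤)
    (τ : ℝ) (hτ : 0 < τ) (ν : P2 d) (hν : ν.1 = m.1.map fun x => x + τ • b x) :
    infConv φ κ ν ≤ infConv φ κ m
      + τ * ∫ p, ⟪(κ ^ 2)⁻¹ • (p.1 - p.2), b p.1⟫_ℝ ∂π
      + τ ^ 2 / (2 * κ ^ 2) * ∫ x, ‖b x‖ ^ 2 ∂m.1
      + Nke mhat φ κ ε R m := by
  obtain ⟨hκ0, hκ1⟩ := hκ
  have hκ2 : (0:ℝ) < κ ^ 2 := by positivity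
  have hπc : IsCoupling π m μb := hπ.1
  haveI := hπc.prob
  have hopt : Wcost π = Wd m μb :=
    le_antisymm (le_iInf₂ fun π' h' => hπ.2 π' h') (Wd_le_of_coupling hπc)
  have hWfin : Wcost π < ⊤ := Wcost_lt_top_of_coupling hπc
  set A : Ed d × Ed d → ℝ := fun p => ‖p.1 - p.2‖^2 with hA
  set Bf : Ed d × Ed d → ℝ := fun p => ‖b p.1‖^2 with hB
  set Cf : Ed d × Ed d → ℝ := fun p => ⟪p.1 - p.2, b p.1⟫_ℝ with hC
  have hAm : Measurable A := by fun_prop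
  have hBm : Measurable Bf := ((hb.comp measurable_fst).norm).pow_const 2
  have hCm : Measurable Cf := (measurable_fst.sub measurable_snd).inner (hb.comp measurable_fst)
  have hnn : ∀ v : Ed d, (‖(‖v‖^2 : ℝ)‖₊ : ℝ≥0∞) = (‖v‖₊ : ℝ≥0∞)^2 := fun v => by
    rw [← ENNReal.coe_pow]; congr 1; ext; push_cast
    simp [Real.norm_of_nonneg (sq_nonneg _)]
  have hBlint : ∫⁻ p, (‖b p.1‖₊ : ℝ≥0∞)^2 ∂π < ⊤ := by
    rw [lintegral_fst hπc (f := fun x => (‖b x‖₊ : ℝ≥0∞)^2) (by fun_prop)]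
    exact hb2
  have hAint : Integrable A π := ⟨hAm.aestronglyMeasurable, by
    show ∫⁻ p, (‖A p‖₊ : ℝ≥0∞) ∂π < ⊤
    have hcc : ∫⁻ p, (‖A p‖₊ : ℝ≥0∞) ∂π = Wcost π := by
      unfold Wcost; exact lintegral_congr fun p => hnn _
    rw [hcc]; exact hWfin⟩
  have hBint : Integrable Bf π := ⟨hBm.aestronglyMeasurable, by
    show ∫⁻ p, (‖Bf p‖₊ : ℝ≥0∞) ∂π < ⊤
    have hcc : ∫⁻ p, (‖Bf p‖₊ : ℝ≥0∞) ∂π = ∫⁻ p, (‖b p.1‖₊ : ℝ≥0∞)^2 ∂π :=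
      lintegral_congr fun p => hnn _
    rw [hcc]; exact hBlint⟩
  have hCint : Integrable Cf π := by
    refine ((hAint.add hBint).div_const 2).mono' hCm.aestronglyMeasurable
      (ae_of_all _ fun p => ?_)
    have h1 := abs_real_inner_le_norm (p.1 - p.2) (b p.1)
    rw [Real.norm_eq_abs]
    simp only [hA, hB, hC, Pi.add_apply, Pi.div_apply]
    nlinarith [norm_nonneg (p.1 - p.2), norm_nonneg (b p.1), sq_nonneg (‖p.1 - p.2‖ - ‖b p.1‖)]
  have hWc : (Wcost π).toReal = ∫ p, A p ∂π := by
    rw [integral_eq_lintegral_of_nonneg_ae (ae_of_all _ fun p => sq_nonneg _)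
      hAm.aestronglyMeasurable]
    congr 1
    unfold Wcost
    refine lintegral_congr fun p => ?_
    rw [ENNReal.ofReal_pow (norm_nonneg _), ofReal_norm, enorm_eq_nnnorm]
  set f : Ed d × Ed d → Ed d := fun p => p.1 + τ • b p.1 with hf
  have hu : Measurable fun x : Ed d => x + τ • b x := by fun_prop
  have hfm : Measurable f := by fun_prop
  have hν' : ν.1 = π.map f := by
    rw [hν, ← hπc.1, Measure.map_map hu measurable_fst]; rfl
  have hμb' : μb.1 = π.map Prod.snd := hπc.2.symm
  have hcoup : IsCoupling (π.map fun p => (f p, Prod.snd p)) ν μb :=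
    isCoupling_map hπc hfm measurable_snd hν' hμb'
  have hW2sq : W2 ν μb ^ 2 ≤ (∫⁻ p, (‖f p - p.2‖₊ : ℝ≥0∞)^2 ∂π).toReal := by
    have h := W2_sq_le_of_coupling hcoup
    rwa [Wcost_map hfm measurable_snd] at h
  set D : Ed d × Ed d → ℝ := fun p => ‖p.1 - p.2 + τ • b p.1‖^2 with hD
  have hDm : Measurable D := by fun_prop
  have hDlint : (∫⁻ p, (‖f p - p.2‖₊ : ℝ≥0∞)^2 ∂π).toReal = ∫ p, D p ∂π := by
    rw [integral_eq_lintegral_of_nonneg_ae (ae_of_all _ fun p => sq_nonneg _)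
      hDm.aestronglyMeasurable]
    congr 1
    refine lintegral_congr fun p => ?_
    have heq : f p - p.2 = p.1 - p.2 + τ • b p.1 := by
      show p.1 + τ • b p.1 - p.2 = _; exact add_sub_right_comm _ _ _
    rw [heq, ENNReal.ofReal_pow (norm_nonneg _), ofReal_norm, enorm_eq_nnnorm]
  have hDexp : ∀ p : Ed d × Ed d, D p = A p + 2*τ*Cf p + τ^2 * Bf p := by
    intro p
    show ‖p.1 - p.2 + τ • b p.1‖^2 = ‖p.1 - p.2‖^2 + 2*τ*⟪p.1 - p.2, b p.1⟫_ℝ + τ^2 * ‖b p.1‖^2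
    rw [norm_add_sq_real, real_inner_smul_right, norm_smul, Real.norm_eq_abs, mul_pow, sq_abs]
    ring
  have hDint : ∫ p, D p ∂π = ∫ p, A p ∂π + 2*τ*(∫ p, Cf p ∂π) + τ^2 * ∫ p, Bf p ∂π := by
    have hfe : D = fun p => A p + 2*τ*Cf p + τ^2*Bf p := funext hDexp
    have hACint : Integrable (fun p => A p + 2*τ*Cf p) π := hAint.add (hCint.const_mul (2*τ))
    have hBint' : Integrable (fun p => τ^2*Bf p) π := hBint.const_mul (τ^2)
    have hCint' : Integrable (fun p => 2*τ*Cf p) π := hCint.const_mul (2*τ)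
    rw [hfe, integral_add hACint hBint', integral_add hAint hCint',
      integral_const_mul, integral_const_mul]
  have hBmarg : ∫ p, Bf p ∂π = ∫ x, ‖b x‖^2 ∂m.1 := by
    have hBx : Measurable fun x : Ed d => ‖b x‖^2 := (hb.norm).pow_const 2
    rw [← hπc.1, integral_map measurable_fst.aemeasurable hBx.aestronglyMeasurable]
  have hCsmul : ∫ p, ⟪(κ^2)⁻¹ • (p.1 - p.2), b p.1⟫_ℝ ∂π = (κ^2)⁻¹ * ∫ p, Cf p ∂π := by
    simp_rw [real_inner_smul_left]
    exact integral_const_mul _ _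
  have hWm2 : W2 m μb ^ 2 = ∫ p, A p ∂π := by rw [W2_sq, ← hopt, hWc]
  have step1 : infConv φ κ ν ≤ φ μb + 1/(2*κ^2) * W2 ν μb ^ 2 := infConv_le hφ.nonneg hκ0 μb
  have step2 : W2 ν μb ^ 2 ≤ ∫ p, A p ∂π + 2*τ*(∫ p, Cf p ∂π) + τ^2 * ∫ p, Bf p ∂π := by
    rw [← hDint]
    exact hW2sq.trans hDlint.le
  have step3 : φ μb + 1/(2*κ^2) * W2 m μb ^ 2 ≤ infConv φ κ m + Nke mhat φ κ ε R m :=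
    ek_le_infConv_add hφ hR hκ0 hε hm hek
  rw [hWm2] at step3
  rw [hCsmul, ← hBmarg]
  have c0 : (0:ℝ) ≤ 1/(2*κ^2) := by positivity
  have h8 := mul_le_mul_of_nonneg_left step2 c0
  have hid1 : 1/(2*κ^2) * (∫ p, A p ∂π + 2*τ*(∫ p, Cf p ∂π) + τ^2 * ∫ p, Bf p ∂π)
      = 1/(2*κ^2) * (∫ p, A p ∂π) + τ*((κ^2)⁻¹ * ∫ p, Cf p ∂π)
        + τ^2/(2*κ^2) * ∫ p, Bf p ∂π := by
    field_simp
  linarith [step1, h8, step3, hid1]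
end
end
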